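/- For every ring R and every natural number n ≥ 3, there is no Kochen–Specker coloring of the idempotents of the matrix ring Mₙ(R) = Matrix (Fin n) (Fin n) R. -/

import Mathlib

/-- A Kochen–Specker coloring of the idempotents of a ring `M`. -/
def IsKSColoring {M : Type*} [Ring M] (c : {e : M // e * e = e} → Bool) : Prop :=
  ∀ (k : ℕ) (e : Fin k → {e : M // e * e = e}),
    (∀ i j : Fin k, i ≠ j → (e i : M) * (e j : M) = 0) →
    ((∀ i j : Fin k, c (e i) = true → c (e j) = true → i = j) ∧
      ((∑ i, (e i : M)) = 1 → ∃! i : Fin k, c (e i) = true))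

namespace NoKS

open Matrix

/-! ### Boolean helpers -/

theorem bpp {p q : Bool} (h : ¬(p = true ∧ q = true)) (hp : p = true) : q = false := by
  cases q with
  | false => rfl
  | true => exact absurd ⟨hp, rfl⟩ h

theorem bpq {p q : Bool} (h : ¬(p = true ∧ q = true)) (hq : q = true) : p = false := by
  cases p with
  | false => rfl
  | true => exact absurd ⟨rfl, hq⟩ h

theorem br1 {a b c : Bool} (h : a = true ∨ b = true ∨ c = true) (hb : b = false)
    (hc : c = false) : a = true := by cases a <;> simp_all

theorem br2 {a b c : Bool} (h : a = true ∨ b = true ∨ c = true) (ha : a = false)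
    (hc : c = false) : b = true := by cases b <;> simp_all

theorem br3 {a b c : Bool} (h : a = true ∨ b = true ∨ c = true) (ha : a = false)
    (hb : b = false) : c = true := by cases c <;> simp_all

theorem bc3 {a b c : Bool} (h : a = true ∨ b = true ∨ c = true) (ha : a = false)
    (hb : b = false) (hc : c = false) : False := by simp_all

theorem bc2 {p q : Bool} (h : ¬(p = true ∧ q = true)) (hp : p = true) (hq : q = true) :
    False := h ⟨hp, hq⟩

/-! ### Diagonal unit matrices -/

def du (S : Type*) [Ring S] {k : ℕ} (j : Fin k) : Matrix (Fin k) (Fin k) S :=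
  of fun a b => if a = j ∧ b = j then 1 else 0

theorem du_apply (S : Type*) [Ring S] {k : ℕ} (j a b : Fin k) :
    du S j a b = if a = j ∧ b = j then 1 else 0 := rfl

theorem du_mul_same (S : Type*) [Ring S] {k : ℕ} (j : Fin k) : du S j * du S j = du S j := by
  ext a b
  rw [mul_apply, Finset.sum_eq_single j]
  · simp only [du_apply]
    split_ifs with h1 h2 h3 <;> simp_all
  · intro x _ hx
    simp [du_apply, hx]
  · simp

theorem du_mul_ne (S : Type*) [Ring S] {k : ℕ} {i j : Fin k} (h : i ≠ j) :
    du S i * du S j = 0 := by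
  ext a b
  rw [mul_apply, Finset.sum_eq_zero]
  · rfl
  · intro x _
    rcases eq_or_ne x i with rfl | hxi
    · simp [du_apply, h]
    · simp [du_apply, hxi]

theorem du_sum (S : Type*) [Ring S] {k : ℕ} : ∑ j : Fin k, du S j = 1 := by
  ext a b
  rw [Matrix.sum_apply]
  rcases eq_or_ne a b with rfl | hab
  · rw [Finset.sum_eq_single a, du_apply, if_pos ⟨rfl, rfl⟩, one_apply_eq]
    · intro j _ hj; simp [du_apply, Ne.symm hj]
    · simp
  · rw [one_apply_ne hab, Finset.sum_eq_zero]
    intro j _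
    rcases eq_or_ne a j with rfl | haj
    · simp [du_apply, Ne.symm hab]
    · simp [du_apply, haj]

section

variable {R : Type*} [Ring R] {n m : ℕ}

/-! ### The block embedding ring hom -/

def blk (σ : Fin 3 ⊕ Fin m ≃ Fin n) :
    Matrix (Fin 3) (Fin 3) ℤ × Matrix (Fin m) (Fin m) ℤ →+* Matrix (Fin n) (Fin n) R where
  toFun p := (fromBlocks (p.1.map (Int.cast : ℤ → R)) 0 0 (p.2.map (Int.cast : ℤ → R))).submatrix
      σ.symm σ.symm
  map_one' := by
    show (fromBlocks ((1 : Matrix (Fin 3) (Fin 3) ℤ).map (Int.cast : ℤ → R)) 0 0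
        ((1 : Matrix (Fin m) (Fin m) ℤ).map (Int.cast : ℤ → R))).submatrix σ.symm σ.symm = 1
    rw [Matrix.map_one _ (by simp) (by simp), Matrix.map_one _ (by simp) (by simp),
      fromBlocks_one, submatrix_one_equiv]
  map_mul' p q := by
    show _ = _
    rw [submatrix_mul_equiv]
    congr 1
    rw [fromBlocks_multiply]
    have h1 : ((p.1 * q.1).map (Int.cast : ℤ → R)) = p.1.map Int.cast * q.1.map Int.cast := by
      simpa using Matrix.map_mul (L := p.1) (M := q.1) (f := Int.castRingHom R)
    have h2 : ((p.2 * q.2).map (Int.cast : ℤ → R)) = p.2.map Int.cast * q.2.map Int.cast := by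
      simpa using Matrix.map_mul (L := p.2) (M := q.2) (f := Int.castRingHom R)
    simp [Prod.fst_mul, Prod.snd_mul, h1, h2]
  map_zero' := by
    show (fromBlocks ((0 : Matrix (Fin 3) (Fin 3) ℤ).map (Int.cast : ℤ → R)) 0 0
        ((0 : Matrix (Fin m) (Fin m) ℤ).map (Int.cast : ℤ → R))).submatrix σ.symm σ.symm = 0
    rw [Matrix.map_zero _ (by simp), Matrix.map_zero _ (by simp), fromBlocks_zero]
    rfl
  map_add' p q := by
    have h : fromBlocks (((p + q).1).map (Int.cast : ℤ → R)) 0 0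
          (((p + q).2).map (Int.cast : ℤ → R))
        = fromBlocks (p.1.map (Int.cast : ℤ → R)) 0 0 (p.2.map (Int.cast : ℤ → R))
          + fromBlocks (q.1.map (Int.cast : ℤ → R)) 0 0 (q.2.map (Int.cast : ℤ → R)) := by
      rw [fromBlocks_add]
      simp [Prod.fst_add, Prod.snd_add, Matrix.map_add (Int.cast : ℤ → R) (fun a b => by push_cast; ring)]
    rw [h]
    rfl

/-- first-block corner embedding -/
def P (σ : Fin 3 ⊕ Fin m ≃ Fin n) (A : Matrix (Fin 3) (Fin 3) ℤ) : Matrix (Fin n) (Fin n) R :=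
  blk σ (A, 0)

/-- second-block embedding -/
def Q (σ : Fin 3 ⊕ Fin m ≃ Fin n) (B : Matrix (Fin m) (Fin m) ℤ) : Matrix (Fin n) (Fin n) R :=
  blk σ (0, B)

theorem P_mul_P (σ : Fin 3 ⊕ Fin m ≃ Fin n) (A B : Matrix (Fin 3) (Fin 3) ℤ) :
    (P σ A : Matrix (Fin n) (Fin n) R) * P σ B = P σ (A * B) := by
  rw [P, P, P, ← _root_.map_mul]
  congr 1
  rw [Prod.mk_mul_mk, mul_zero]

theorem P_mul_Q (σ : Fin 3 ⊕ Fin m ≃ Fin n) (A : Matrix (Fin 3) (Fin 3) ℤ)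
    (B : Matrix (Fin m) (Fin m) ℤ) : (P σ A : Matrix (Fin n) (Fin n) R) * Q σ B = 0 := by
  rw [P, Q, ← _root_.map_mul, Prod.mk_mul_mk, mul_zero, zero_mul, Prod.mk_zero_zero, _root_.map_zero]

theorem Q_mul_P (σ : Fin 3 ⊕ Fin m ≃ Fin n) (A : Matrix (Fin 3) (Fin 3) ℤ)
    (B : Matrix (Fin m) (Fin m) ℤ) : (Q σ B : Matrix (Fin n) (Fin n) R) * P σ A = 0 := by
  rw [P, Q, ← _root_.map_mul, Prod.mk_mul_mk, mul_zero, zero_mul, Prod.mk_zero_zero, _root_.map_zero]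

theorem Q_mul_Q (σ : Fin 3 ⊕ Fin m ≃ Fin n) (A B : Matrix (Fin m) (Fin m) ℤ) :
    (Q σ A : Matrix (Fin n) (Fin n) R) * Q σ B = Q σ (A * B) := by
  rw [Q, Q, Q, ← _root_.map_mul, Prod.mk_mul_mk, mul_zero]

/-! ### Idempotent elements -/

def pe (σ : Fin 3 ⊕ Fin m ≃ Fin n) (A : Matrix (Fin 3) (Fin 3) ℤ) (hA : A * A = A) :
    {e : Matrix (Fin n) (Fin n) R // e * e = e} :=
  ⟨P σ A, by rw [P_mul_P, hA]⟩

def ue (x : Fin n) : {e : Matrix (Fin n) (Fin n) R // e * e = e} :=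
  ⟨du R x, du_mul_same R x⟩

theorem P_zero (σ : Fin 3 ⊕ Fin m ≃ Fin n) : (P σ 0 : Matrix (Fin n) (Fin n) R) = 0 := by
  rw [P, Prod.mk_zero_zero, _root_.map_zero]

theorem blk_du (σ : Fin 3 ⊕ Fin m ≃ Fin n) (j : Fin m) :
    (Q σ (du ℤ j) : Matrix (Fin n) (Fin n) R) = du R (σ (Sum.inr j)) := by
  ext a b
  have hQ : (Q σ (du ℤ j) : Matrix (Fin n) (Fin n) R) a b
      = (fromBlocks ((0 : Matrix (Fin 3) (Fin 3) ℤ).map (Int.cast : ℤ → R)) 0 0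
          ((du ℤ j).map (Int.cast : ℤ → R))) (σ.symm a) (σ.symm b) := rfl
  have h1 : (a = σ (Sum.inr j)) ↔ (σ.symm a = Sum.inr j) := (Equiv.symm_apply_eq σ).symm
  have h2 : (b = σ (Sum.inr j)) ↔ (σ.symm b = Sum.inr j) := (Equiv.symm_apply_eq σ).symm
  rw [hQ, du_apply]
  simp only [h1, h2]
  rcases σ.symm a with i | p <;> rcases σ.symm b with i' | q
  · simp [fromBlocks_apply₁₁]
  · simp [fromBlocks_apply₁₂]
  · simp [fromBlocks_apply₂₁]
  · simp only [fromBlocks_apply₂₂, Matrix.map_apply, du_apply, Sum.inr.injEq]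
    split_ifs <;> simp

theorem pe_orth (σ : Fin 3 ⊕ Fin m ≃ Fin n) {A B : Matrix (Fin 3) (Fin 3) ℤ}
    (hA : A * A = A) (hB : B * B = B) (h : A * B = 0) :
    ((pe σ A hA : {e : Matrix (Fin n) (Fin n) R // e * e = e}) : Matrix (Fin n) (Fin n) R) *
      ((pe σ B hB : {e : Matrix (Fin n) (Fin n) R // e * e = e}) : Matrix (Fin n) (Fin n) R)
      = 0 := by
  show (P σ A : Matrix (Fin n) (Fin n) R) * P σ B = 0
  rw [P_mul_P, h, P_zero]

/-! ### Coloring lemmas -/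

theorem pairlem {c : {e : Matrix (Fin n) (Fin n) R // e * e = e} → Bool}
    (hc : IsKSColoring c) (p q : {e : Matrix (Fin n) (Fin n) R // e * e = e})
    (h1 : (p : Matrix (Fin n) (Fin n) R) * q = 0) (h2 : (q : Matrix (Fin n) (Fin n) R) * p = 0) :
    ¬(c p = true ∧ c q = true) := by
  rintro ⟨hp, hq⟩
  have horth : ∀ i j : Fin 2, i ≠ j →
      ((![p, q] i : {e : Matrix (Fin n) (Fin n) R // e * e = e}) : Matrix (Fin n) (Fin n) R) *
        ((![p, q] j : {e : Matrix (Fin n) (Fin n) R // e * e = e}) : Matrix (Fin n) (Fin n) R)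
        = 0 := by
    intro i j hij
    fin_cases i <;> fin_cases j <;>
      first
        | exact absurd rfl hij
        | exact h1
        | exact h2
  obtain ⟨hat, -⟩ := hc 2 ![p, q] horth
  have h01 := hat 0 1 hp hq
  exact absurd h01 (by decide)

theorem reslem {c : {e : Matrix (Fin n) (Fin n) R // e * e = e} → Bool}
    (hc : IsKSColoring c) (σ : Fin 3 ⊕ Fin m ≃ Fin n)
    (hfalse : ∀ j : Fin m, c (ue (σ (Sum.inr j))) = false)
    (A B C : Matrix (Fin 3) (Fin 3) ℤ) (hA : A * A = A) (hB : B * B = B) (hC : C * C = C)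
    (hAB : A * B = 0) (hBA : B * A = 0) (hAC : A * C = 0) (hCA : C * A = 0)
    (hBC : B * C = 0) (hCB : C * B = 0) (hsum : A + B + C = 1) :
    c (pe σ A hA) = true ∨ c (pe σ B hB) = true ∨ c (pe σ C hC) = true := by
  classical
  set f : Fin 3 ⊕ Fin m → {e : Matrix (Fin n) (Fin n) R // e * e = e} :=
    Sum.elim ![pe σ A hA, pe σ B hB, pe σ C hC] (fun j => ue (σ (Sum.inr j))) with hf
  have horth : ∀ s t : Fin 3 ⊕ Fin m, s ≠ t →
      (f s : Matrix (Fin n) (Fin n) R) * (f t : Matrix (Fin n) (Fin n) R) = 0 := by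
    intro s t hst
    rcases s with i | p <;> rcases t with i' | q
    · have hii : i ≠ i' := by simpa using hst
      fin_cases i <;> fin_cases i' <;>
        first
          | exact absurd rfl hii
          | (show (P σ A : Matrix (Fin n) (Fin n) R) * P σ B = 0 ;
              rw [P_mul_P, hAB, P_zero])
          | (show (P σ A : Matrix (Fin n) (Fin n) R) * P σ C = 0 ;
              rw [P_mul_P, hAC, P_zero])
          | (show (P σ B : Matrix (Fin n) (Fin n) R) * P σ A = 0 ;
              rw [P_mul_P, hBA, P_zero])
          | (show (P σ B : Matrix (Fin n) (Fin n) R) * P σ C = 0 ;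
              rw [P_mul_P, hBC, P_zero])
          | (show (P σ C : Matrix (Fin n) (Fin n) R) * P σ A = 0 ;
              rw [P_mul_P, hCA, P_zero])
          | (show (P σ C : Matrix (Fin n) (Fin n) R) * P σ B = 0 ;
              rw [P_mul_P, hCB, P_zero])
    · have hval : (f (Sum.inr q) : Matrix (Fin n) (Fin n) R) = Q σ (du ℤ q) := by
        show (du R (σ (Sum.inr q)) : Matrix (Fin n) (Fin n) R) = _
        rw [blk_du]
      rw [hval]
      fin_cases i <;> exact P_mul_Q σ _ _
    · have hval : (f (Sum.inr p) : Matrix (Fin n) (Fin n) R) = Q σ (du ℤ p) := by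
        show (du R (σ (Sum.inr p)) : Matrix (Fin n) (Fin n) R) = _
        rw [blk_du]
      rw [hval]
      fin_cases i' <;> exact Q_mul_P σ _ _
    · have hpq : p ≠ q := by simpa using hst
      have hval1 : (f (Sum.inr p) : Matrix (Fin n) (Fin n) R) = Q σ (du ℤ p) := by
        show (du R (σ (Sum.inr p)) : Matrix (Fin n) (Fin n) R) = _
        rw [blk_du]
      have hval2 : (f (Sum.inr q) : Matrix (Fin n) (Fin n) R) = Q σ (du ℤ q) := by
        show (du R (σ (Sum.inr q)) : Matrix (Fin n) (Fin n) R) = _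
        rw [blk_du]
      rw [hval1, hval2, Q_mul_Q, du_mul_ne ℤ hpq]
      show (Q σ 0 : Matrix (Fin n) (Fin n) R) = 0
      rw [Q, Prod.mk_zero_zero, _root_.map_zero]
  obtain ⟨-, hex⟩ := hc n (fun x => f (σ.symm x))
    (fun x y hxy => horth _ _ (fun h => hxy (by simpa using σ.symm.injective h)))
  have hsum2 : ∑ x : Fin n, (f (σ.symm x) : Matrix (Fin n) (Fin n) R) = 1 := by
      rw [Equiv.sum_comp σ.symm (fun s => (f s : Matrix (Fin n) (Fin n) R)),
        Fintype.sum_sum_type]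
      have hA3 : ∑ i : Fin 3, (f (Sum.inl i) : Matrix (Fin n) (Fin n) R)
          = P σ A + P σ B + P σ C := by
        rw [Fin.sum_univ_three]
        rfl
      have hBm : ∑ j : Fin m, (f (Sum.inr j) : Matrix (Fin n) (Fin n) R) = Q σ 1 := by
        have : ∀ j : Fin m, (f (Sum.inr j) : Matrix (Fin n) (Fin n) R) = Q σ (du ℤ j) := by
          intro j
          show (du R (σ (Sum.inr j)) : Matrix (Fin n) (Fin n) R) = _
          rw [blk_du]
        rw [Finset.sum_congr rfl (fun j _ => this j)]
        simp only [Q]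
        rw [← map_sum]
        congr 1
        rw [Prod.ext_iff]
        refine ⟨?_, ?_⟩
        · rw [Prod.fst_sum]
          simp
        · rw [Prod.snd_sum]
          simpa using du_sum ℤ
      rw [hA3, hBm]
      show (blk σ (A, 0) : Matrix (Fin n) (Fin n) R) + blk σ (B, 0) + blk σ (C, 0)
          + blk σ (0, 1) = 1
      rw [← _root_.map_add, ← _root_.map_add, ← _root_.map_add]
      have : ((A, 0) + (B, 0) + (C, 0) + (0, 1) :
          Matrix (Fin 3) (Fin 3) ℤ × Matrix (Fin m) (Fin m) ℤ) = 1 := by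
        rw [Prod.mk_add_mk, Prod.mk_add_mk, Prod.mk_add_mk, hsum]
        simp [Prod.ext_iff]
      rw [this, _root_.map_one]
  obtain ⟨x, hx, -⟩ := hex hsum2
  rcases hs : σ.symm x with i | j
  · rw [hs] at hx
    fin_cases i
    · exact Or.inl hx
    · exact Or.inr (Or.inl hx)
    · exact Or.inr (Or.inr hx)
  · rw [hs] at hx
    have hxf : c (ue (σ (Sum.inr j))) = true := hx
    rw [hfalse j] at hxf
    exact absurd hxf (by decide)

end

section Main

variable {R : Type*} [Ring R] {n m : ℕ}

def M0 : Matrix (Fin 3) (Fin 3) ℤ := !![-1, 1, 1; -1, 1, 1; -1, 1, 1]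
def M1 : Matrix (Fin 3) (Fin 3) ℤ := !![0, -1, 1; 0, 0, 0; 0, -1, 1]
def M2 : Matrix (Fin 3) (Fin 3) ℤ := !![0, 0, -1; 0, 0, 0; 0, 0, 1]
def M3 : Matrix (Fin 3) (Fin 3) ℤ := !![0, 0, -1; 0, 0, 1; 0, 0, 1]
def M4 : Matrix (Fin 3) (Fin 3) ℤ := !![0, 0, 0; -1, 0, -1; 1, 0, 1]
def M5 : Matrix (Fin 3) (Fin 3) ℤ := !![0, 0, 0; -1, 1, -2; 0, 0, 0]
def M6 : Matrix (Fin 3) (Fin 3) ℤ := !![0, 0, 0; -1, 1, 0; -1, 1, 0]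
def M7 : Matrix (Fin 3) (Fin 3) ℤ := !![0, 0, 0; -1, 1, 0; 0, 0, 0]
def M8 : Matrix (Fin 3) (Fin 3) ℤ := !![0, 0, 0; -1, 1, 0; 1, -1, 0]
def M9 : Matrix (Fin 3) (Fin 3) ℤ := !![0, 0, 0; 0, 0, 0; -1, 0, 1]
def M10 : Matrix (Fin 3) (Fin 3) ℤ := !![0, 0, 0; 0, 0, 0; -1, 1, 1]
def M11 : Matrix (Fin 3) (Fin 3) ℤ := !![0, 0, 0; 0, 0, 0; 0, -1, 1]
def M12 : Matrix (Fin 3) (Fin 3) ℤ := !![0, 0, 0; 0, 0, 0; 0, 1, 1]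
def M13 : Matrix (Fin 3) (Fin 3) ℤ := !![0, 0, 0; 0, 0, 0; 1, -1, 1]
def M14 : Matrix (Fin 3) (Fin 3) ℤ := !![0, 0, 0; 0, 0, 0; 1, 0, 1]
def M15 : Matrix (Fin 3) (Fin 3) ℤ := !![0, 0, 0; 0, 0, 0; 1, 1, 1]
def M16 : Matrix (Fin 3) (Fin 3) ℤ := !![0, 0, 0; 0, 0, 1; 0, 0, 1]
def M17 : Matrix (Fin 3) (Fin 3) ℤ := !![0, 0, 0; 0, 1, -1; 0, 0, 0]
def M18 : Matrix (Fin 3) (Fin 3) ℤ := !![0, 0, 0; 0, 1, 0; 0, -1, 0]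
def M19 : Matrix (Fin 3) (Fin 3) ℤ := !![0, 0, 0; 0, 1, 0; 0, 0, 0]
def M20 : Matrix (Fin 3) (Fin 3) ℤ := !![0, 0, 0; 0, 1, 0; 0, 1, 0]
def M21 : Matrix (Fin 3) (Fin 3) ℤ := !![0, 0, 0; 0, 1, 1; 0, 0, 0]
def M22 : Matrix (Fin 3) (Fin 3) ℤ := !![0, 0, 1; 0, 0, 1; 0, 0, 1]
def M23 : Matrix (Fin 3) (Fin 3) ℤ := !![0, 1, -1; 0, 1, -1; 0, 0, 0]
def M24 : Matrix (Fin 3) (Fin 3) ℤ := !![0, 1, 0; 0, 1, 0; 0, -1, 0]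
def M25 : Matrix (Fin 3) (Fin 3) ℤ := !![0, 1, 0; 0, 1, 0; 0, 0, 0]
def M26 : Matrix (Fin 3) (Fin 3) ℤ := !![0, 1, 0; 0, 1, 0; 0, 1, 0]
def M27 : Matrix (Fin 3) (Fin 3) ℤ := !![1, -1, 0; 0, 0, 0; -1, 1, 0]
def M28 : Matrix (Fin 3) (Fin 3) ℤ := !![1, -1, 0; 0, 0, 0; 0, 0, 0]
def M29 : Matrix (Fin 3) (Fin 3) ℤ := !![1, -1, 0; 0, 0, 0; 1, -1, 0]
def M30 : Matrix (Fin 3) (Fin 3) ℤ := !![1, -1, 1; 1, -1, 1; 1, -1, 1]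
def M31 : Matrix (Fin 3) (Fin 3) ℤ := !![1, 0, -1; 0, 0, 0; 0, 0, 0]
def M32 : Matrix (Fin 3) (Fin 3) ℤ := !![1, 0, -1; 1, 0, -1; 0, 0, 0]
def M33 : Matrix (Fin 3) (Fin 3) ℤ := !![1, 0, 0; 0, 0, 0; -1, 0, 0]
def M34 : Matrix (Fin 3) (Fin 3) ℤ := !![1, 0, 0; 0, 0, 0; 0, 0, 0]
def M35 : Matrix (Fin 3) (Fin 3) ℤ := !![1, 0, 0; 0, 0, 0; 1, 0, 0]
def M36 : Matrix (Fin 3) (Fin 3) ℤ := !![1, 0, 0; 1, 0, 0; -1, 0, 0]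
def M37 : Matrix (Fin 3) (Fin 3) ℤ := !![1, 0, 0; 1, 0, 0; 0, 0, 0]
def M38 : Matrix (Fin 3) (Fin 3) ℤ := !![1, 0, 0; 1, 0, 0; 1, 0, 0]
def M39 : Matrix (Fin 3) (Fin 3) ℤ := !![1, 0, 1; 0, 0, 0; 0, 0, 0]
def M40 : Matrix (Fin 3) (Fin 3) ℤ := !![1, 0, 1; 1, 0, 1; 0, 0, 0]

theorem core (σ : Fin 3 ⊕ Fin m ≃ Fin n)
    (c : {e : Matrix (Fin n) (Fin n) R // e * e = e} → Bool) (hc : IsKSColoring c)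
    (hfalse : ∀ j : Fin m, c (ue (σ (Sum.inr j))) = false) : False := by
  have hi0 : M0 * M0 = M0 := by decide
  have hi1 : M1 * M1 = M1 := by decide
  have hi2 : M2 * M2 = M2 := by decide
  have hi3 : M3 * M3 = M3 := by decide
  have hi4 : M4 * M4 = M4 := by decide
  have hi5 : M5 * M5 = M5 := by decide
  have hi6 : M6 * M6 = M6 := by decide
  have hi7 : M7 * M7 = M7 := by decide
  have hi8 : M8 * M8 = M8 := by decide
  have hi9 : M9 * M9 = M9 := by decide
  have hi10 : M10 * M10 = M10 := by decide
  have hi11 : M11 * M11 = M11 := by decide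
  have hi12 : M12 * M12 = M12 := by decide
  have hi13 : M13 * M13 = M13 := by decide
  have hi14 : M14 * M14 = M14 := by decide
  have hi15 : M15 * M15 = M15 := by decide
  have hi16 : M16 * M16 = M16 := by decide
  have hi17 : M17 * M17 = M17 := by decide
  have hi18 : M18 * M18 = M18 := by decide
  have hi19 : M19 * M19 = M19 := by decide
  have hi20 : M20 * M20 = M20 := by decide
  have hi21 : M21 * M21 = M21 := by decide
  have hi22 : M22 * M22 = M22 := by decide
  have hi23 : M23 * M23 = M23 := by decide
  have hi24 : M24 * M24 = M24 := by decide
  have hi25 : M25 * M25 = M25 := by decide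
  have hi26 : M26 * M26 = M26 := by decide
  have hi27 : M27 * M27 = M27 := by decide
  have hi28 : M28 * M28 = M28 := by decide
  have hi29 : M29 * M29 = M29 := by decide
  have hi30 : M30 * M30 = M30 := by decide
  have hi31 : M31 * M31 = M31 := by decide
  have hi32 : M32 * M32 = M32 := by decide
  have hi33 : M33 * M33 = M33 := by decide
  have hi34 : M34 * M34 = M34 := by decide
  have hi35 : M35 * M35 = M35 := by decide
  have hi36 : M36 * M36 = M36 := by decide
  have hi37 : M37 * M37 = M37 := by decide
  have hi38 : M38 * M38 = M38 := by decide
  have hi39 : M39 * M39 = M39 := by decide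
  have hi40 : M40 * M40 = M40 := by decide
  have hr0 : c (pe σ M15 hi15) = true ∨ c (pe σ M18 hi18) = true ∨ c (pe σ M33 hi33) = true :=
    reslem hc σ hfalse M15 M18 M33 hi15 hi18 hi33
      (by decide) (by decide) (by decide) (by decide) (by decide) (by decide) (by decide)
  have hr1 : c (pe σ M10 hi10) = true ∨ c (pe σ M25 hi25) = true ∨ c (pe σ M29 hi29) = true :=
    reslem hc σ hfalse M10 M25 M29 hi10 hi25 hi29
      (by decide) (by decide) (by decide) (by decide) (by decide) (by decide) (by decide)
  have hr2 : c (pe σ M6 hi6) = true ∨ c (pe σ M13 hi13) = true ∨ c (pe σ M37 hi37) = true :=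
    reslem hc σ hfalse M6 M13 M37 hi6 hi13 hi37
      (by decide) (by decide) (by decide) (by decide) (by decide) (by decide) (by decide)
  have hr3 : c (pe σ M7 hi7) = true ∨ c (pe σ M9 hi9) = true ∨ c (pe σ M38 hi38) = true :=
    reslem hc σ hfalse M7 M9 M38 hi7 hi9 hi38
      (by decide) (by decide) (by decide) (by decide) (by decide) (by decide) (by decide)
  have hr4 : c (pe σ M0 hi0) = true ∨ c (pe σ M29 hi29) = true ∨ c (pe σ M32 hi32) = true :=
    reslem hc σ hfalse M0 M29 M32 hi0 hi29 hi32
      (by decide) (by decide) (by decide) (by decide) (by decide) (by decide) (by decide)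
  have hr5 : c (pe σ M11 hi11) = true ∨ c (pe σ M20 hi20) = true ∨ c (pe σ M34 hi34) = true :=
    reslem hc σ hfalse M11 M20 M34 hi11 hi20 hi34
      (by decide) (by decide) (by decide) (by decide) (by decide) (by decide) (by decide)
  have hr6 : c (pe σ M3 hi3) = true ∨ c (pe σ M5 hi5) = true ∨ c (pe σ M40 hi40) = true :=
    reslem hc σ hfalse M3 M5 M40 hi3 hi5 hi40
      (by decide) (by decide) (by decide) (by decide) (by decide) (by decide) (by decide)
  have hr7 : c (pe σ M9 hi9) = true ∨ c (pe σ M19 hi19) = true ∨ c (pe σ M35 hi35) = true :=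
    reslem hc σ hfalse M9 M19 M35 hi9 hi19 hi35
      (by decide) (by decide) (by decide) (by decide) (by decide) (by decide) (by decide)
  have hr8 : c (pe σ M22 hi22) = true ∨ c (pe σ M23 hi23) = true ∨ c (pe σ M28 hi28) = true :=
    reslem hc σ hfalse M22 M23 M28 hi22 hi23 hi28
      (by decide) (by decide) (by decide) (by decide) (by decide) (by decide) (by decide)
  have hr9 : c (pe σ M1 hi1) = true ∨ c (pe σ M26 hi26) = true ∨ c (pe σ M31 hi31) = true :=
    reslem hc σ hfalse M1 M26 M31 hi1 hi26 hi31
      (by decide) (by decide) (by decide) (by decide) (by decide) (by decide) (by decide)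
  have hr10 : c (pe σ M8 hi8) = true ∨ c (pe σ M12 hi12) = true ∨ c (pe σ M36 hi36) = true :=
    reslem hc σ hfalse M8 M12 M36 hi8 hi12 hi36
      (by decide) (by decide) (by decide) (by decide) (by decide) (by decide) (by decide)
  have hr11 : c (pe σ M14 hi14) = true ∨ c (pe σ M24 hi24) = true ∨ c (pe σ M27 hi27) = true :=
    reslem hc σ hfalse M14 M24 M27 hi14 hi24 hi27
      (by decide) (by decide) (by decide) (by decide) (by decide) (by decide) (by decide)
  have hr12 : c (pe σ M16 hi16) = true ∨ c (pe σ M17 hi17) = true ∨ c (pe σ M34 hi34) = true :=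
    reslem hc σ hfalse M16 M17 M34 hi16 hi17 hi34
      (by decide) (by decide) (by decide) (by decide) (by decide) (by decide) (by decide)
  have hr13 : c (pe σ M2 hi2) = true ∨ c (pe σ M19 hi19) = true ∨ c (pe σ M39 hi39) = true :=
    reslem hc σ hfalse M2 M19 M39 hi2 hi19 hi39
      (by decide) (by decide) (by decide) (by decide) (by decide) (by decide) (by decide)
  have hr14 : c (pe σ M4 hi4) = true ∨ c (pe σ M21 hi21) = true ∨ c (pe σ M36 hi36) = true :=
    reslem hc σ hfalse M4 M21 M36 hi4 hi21 hi36
      (by decide) (by decide) (by decide) (by decide) (by decide) (by decide) (by decide)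
  have hr15 : c (pe σ M6 hi6) = true ∨ c (pe σ M23 hi23) = true ∨ c (pe σ M30 hi30) = true :=
    reslem hc σ hfalse M6 M23 M30 hi6 hi23 hi30
      (by decide) (by decide) (by decide) (by decide) (by decide) (by decide) (by decide)
  have hp0 : ¬(c (pe σ M0 hi0) = true ∧ c (pe σ M1 hi1) = true) :=
    pairlem hc _ _ (pe_orth σ hi0 hi1 (by decide)) (pe_orth σ hi1 hi0 (by decide))
  have hp1 : ¬(c (pe σ M0 hi0) = true ∧ c (pe σ M23 hi23) = true) :=
    pairlem hc _ _ (pe_orth σ hi0 hi23 (by decide)) (pe_orth σ hi23 hi0 (by decide))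
  have hp2 : ¬(c (pe σ M0 hi0) = true ∧ c (pe σ M29 hi29) = true) :=
    pairlem hc _ _ (pe_orth σ hi0 hi29 (by decide)) (pe_orth σ hi29 hi0 (by decide))
  have hp3 : ¬(c (pe σ M0 hi0) = true ∧ c (pe σ M32 hi32) = true) :=
    pairlem hc _ _ (pe_orth σ hi0 hi32 (by decide)) (pe_orth σ hi32 hi0 (by decide))
  have hp4 : ¬(c (pe σ M1 hi1) = true ∧ c (pe σ M20 hi20) = true) :=
    pairlem hc _ _ (pe_orth σ hi1 hi20 (by decide)) (pe_orth σ hi20 hi1 (by decide))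
  have hp5 : ¬(c (pe σ M1 hi1) = true ∧ c (pe σ M26 hi26) = true) :=
    pairlem hc _ _ (pe_orth σ hi1 hi26 (by decide)) (pe_orth σ hi26 hi1 (by decide))
  have hp6 : ¬(c (pe σ M1 hi1) = true ∧ c (pe σ M31 hi31) = true) :=
    pairlem hc _ _ (pe_orth σ hi1 hi31 (by decide)) (pe_orth σ hi31 hi1 (by decide))
  have hp7 : ¬(c (pe σ M2 hi2) = true ∧ c (pe σ M19 hi19) = true) :=
    pairlem hc _ _ (pe_orth σ hi2 hi19 (by decide)) (pe_orth σ hi19 hi2 (by decide))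
  have hp8 : ¬(c (pe σ M2 hi2) = true ∧ c (pe σ M25 hi25) = true) :=
    pairlem hc _ _ (pe_orth σ hi2 hi25 (by decide)) (pe_orth σ hi25 hi2 (by decide))
  have hp9 : ¬(c (pe σ M2 hi2) = true ∧ c (pe σ M39 hi39) = true) :=
    pairlem hc _ _ (pe_orth σ hi2 hi39 (by decide)) (pe_orth σ hi39 hi2 (by decide))
  have hp10 : ¬(c (pe σ M2 hi2) = true ∧ c (pe σ M40 hi40) = true) :=
    pairlem hc _ _ (pe_orth σ hi2 hi40 (by decide)) (pe_orth σ hi40 hi2 (by decide))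
  have hp11 : ¬(c (pe σ M3 hi3) = true ∧ c (pe σ M5 hi5) = true) :=
    pairlem hc _ _ (pe_orth σ hi3 hi5 (by decide)) (pe_orth σ hi5 hi3 (by decide))
  have hp12 : ¬(c (pe σ M3 hi3) = true ∧ c (pe σ M23 hi23) = true) :=
    pairlem hc _ _ (pe_orth σ hi3 hi23 (by decide)) (pe_orth σ hi23 hi3 (by decide))
  have hp13 : ¬(c (pe σ M3 hi3) = true ∧ c (pe σ M40 hi40) = true) :=
    pairlem hc _ _ (pe_orth σ hi3 hi40 (by decide)) (pe_orth σ hi40 hi3 (by decide))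
  have hp14 : ¬(c (pe σ M4 hi4) = true ∧ c (pe σ M21 hi21) = true) :=
    pairlem hc _ _ (pe_orth σ hi4 hi21 (by decide)) (pe_orth σ hi21 hi4 (by decide))
  have hp15 : ¬(c (pe σ M4 hi4) = true ∧ c (pe σ M33 hi33) = true) :=
    pairlem hc _ _ (pe_orth σ hi4 hi33 (by decide)) (pe_orth σ hi33 hi4 (by decide))
  have hp16 : ¬(c (pe σ M4 hi4) = true ∧ c (pe σ M36 hi36) = true) :=
    pairlem hc _ _ (pe_orth σ hi4 hi36 (by decide)) (pe_orth σ hi36 hi4 (by decide))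
  have hp17 : ¬(c (pe σ M5 hi5) = true ∧ c (pe σ M32 hi32) = true) :=
    pairlem hc _ _ (pe_orth σ hi5 hi32 (by decide)) (pe_orth σ hi32 hi5 (by decide))
  have hp18 : ¬(c (pe σ M5 hi5) = true ∧ c (pe σ M37 hi37) = true) :=
    pairlem hc _ _ (pe_orth σ hi5 hi37 (by decide)) (pe_orth σ hi37 hi5 (by decide))
  have hp19 : ¬(c (pe σ M5 hi5) = true ∧ c (pe σ M40 hi40) = true) :=
    pairlem hc _ _ (pe_orth σ hi5 hi40 (by decide)) (pe_orth σ hi40 hi5 (by decide))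
  have hp20 : ¬(c (pe σ M6 hi6) = true ∧ c (pe σ M11 hi11) = true) :=
    pairlem hc _ _ (pe_orth σ hi6 hi11 (by decide)) (pe_orth σ hi11 hi6 (by decide))
  have hp21 : ¬(c (pe σ M6 hi6) = true ∧ c (pe σ M13 hi13) = true) :=
    pairlem hc _ _ (pe_orth σ hi6 hi13 (by decide)) (pe_orth σ hi13 hi6 (by decide))
  have hp22 : ¬(c (pe σ M6 hi6) = true ∧ c (pe σ M23 hi23) = true) :=
    pairlem hc _ _ (pe_orth σ hi6 hi23 (by decide)) (pe_orth σ hi23 hi6 (by decide))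
  have hp23 : ¬(c (pe σ M6 hi6) = true ∧ c (pe σ M30 hi30) = true) :=
    pairlem hc _ _ (pe_orth σ hi6 hi30 (by decide)) (pe_orth σ hi30 hi6 (by decide))
  have hp24 : ¬(c (pe σ M6 hi6) = true ∧ c (pe σ M36 hi36) = true) :=
    pairlem hc _ _ (pe_orth σ hi6 hi36 (by decide)) (pe_orth σ hi36 hi6 (by decide))
  have hp25 : ¬(c (pe σ M6 hi6) = true ∧ c (pe σ M37 hi37) = true) :=
    pairlem hc _ _ (pe_orth σ hi6 hi37 (by decide)) (pe_orth σ hi37 hi6 (by decide))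
  have hp26 : ¬(c (pe σ M6 hi6) = true ∧ c (pe σ M38 hi38) = true) :=
    pairlem hc _ _ (pe_orth σ hi6 hi38 (by decide)) (pe_orth σ hi38 hi6 (by decide))
  have hp27 : ¬(c (pe σ M7 hi7) = true ∧ c (pe σ M9 hi9) = true) :=
    pairlem hc _ _ (pe_orth σ hi7 hi9 (by decide)) (pe_orth σ hi9 hi7 (by decide))
  have hp28 : ¬(c (pe σ M7 hi7) = true ∧ c (pe σ M14 hi14) = true) :=
    pairlem hc _ _ (pe_orth σ hi7 hi14 (by decide)) (pe_orth σ hi14 hi7 (by decide))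
  have hp29 : ¬(c (pe σ M7 hi7) = true ∧ c (pe σ M22 hi22) = true) :=
    pairlem hc _ _ (pe_orth σ hi7 hi22 (by decide)) (pe_orth σ hi22 hi7 (by decide))
  have hp30 : ¬(c (pe σ M7 hi7) = true ∧ c (pe σ M38 hi38) = true) :=
    pairlem hc _ _ (pe_orth σ hi7 hi38 (by decide)) (pe_orth σ hi38 hi7 (by decide))
  have hp31 : ¬(c (pe σ M7 hi7) = true ∧ c (pe σ M40 hi40) = true) :=
    pairlem hc _ _ (pe_orth σ hi7 hi40 (by decide)) (pe_orth σ hi40 hi7 (by decide))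
  have hp32 : ¬(c (pe σ M8 hi8) = true ∧ c (pe σ M10 hi10) = true) :=
    pairlem hc _ _ (pe_orth σ hi8 hi10 (by decide)) (pe_orth σ hi10 hi8 (by decide))
  have hp33 : ¬(c (pe σ M8 hi8) = true ∧ c (pe σ M12 hi12) = true) :=
    pairlem hc _ _ (pe_orth σ hi8 hi12 (by decide)) (pe_orth σ hi12 hi8 (by decide))
  have hp34 : ¬(c (pe σ M8 hi8) = true ∧ c (pe σ M15 hi15) = true) :=
    pairlem hc _ _ (pe_orth σ hi8 hi15 (by decide)) (pe_orth σ hi15 hi8 (by decide))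
  have hp35 : ¬(c (pe σ M8 hi8) = true ∧ c (pe σ M36 hi36) = true) :=
    pairlem hc _ _ (pe_orth σ hi8 hi36 (by decide)) (pe_orth σ hi36 hi8 (by decide))
  have hp36 : ¬(c (pe σ M9 hi9) = true ∧ c (pe σ M19 hi19) = true) :=
    pairlem hc _ _ (pe_orth σ hi9 hi19 (by decide)) (pe_orth σ hi19 hi9 (by decide))
  have hp37 : ¬(c (pe σ M9 hi9) = true ∧ c (pe σ M26 hi26) = true) :=
    pairlem hc _ _ (pe_orth σ hi9 hi26 (by decide)) (pe_orth σ hi26 hi9 (by decide))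
  have hp38 : ¬(c (pe σ M9 hi9) = true ∧ c (pe σ M29 hi29) = true) :=
    pairlem hc _ _ (pe_orth σ hi9 hi29 (by decide)) (pe_orth σ hi29 hi9 (by decide))
  have hp39 : ¬(c (pe σ M9 hi9) = true ∧ c (pe σ M35 hi35) = true) :=
    pairlem hc _ _ (pe_orth σ hi9 hi35 (by decide)) (pe_orth σ hi35 hi9 (by decide))
  have hp40 : ¬(c (pe σ M9 hi9) = true ∧ c (pe σ M38 hi38) = true) :=
    pairlem hc _ _ (pe_orth σ hi9 hi38 (by decide)) (pe_orth σ hi38 hi9 (by decide))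
  have hp41 : ¬(c (pe σ M10 hi10) = true ∧ c (pe σ M25 hi25) = true) :=
    pairlem hc _ _ (pe_orth σ hi10 hi25 (by decide)) (pe_orth σ hi25 hi10 (by decide))
  have hp42 : ¬(c (pe σ M10 hi10) = true ∧ c (pe σ M29 hi29) = true) :=
    pairlem hc _ _ (pe_orth σ hi10 hi29 (by decide)) (pe_orth σ hi29 hi10 (by decide))
  have hp43 : ¬(c (pe σ M10 hi10) = true ∧ c (pe σ M35 hi35) = true) :=
    pairlem hc _ _ (pe_orth σ hi10 hi35 (by decide)) (pe_orth σ hi35 hi10 (by decide))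
  have hp44 : ¬(c (pe σ M11 hi11) = true ∧ c (pe σ M20 hi20) = true) :=
    pairlem hc _ _ (pe_orth σ hi11 hi20 (by decide)) (pe_orth σ hi20 hi11 (by decide))
  have hp45 : ¬(c (pe σ M11 hi11) = true ∧ c (pe σ M34 hi34) = true) :=
    pairlem hc _ _ (pe_orth σ hi11 hi34 (by decide)) (pe_orth σ hi34 hi11 (by decide))
  have hp46 : ¬(c (pe σ M11 hi11) = true ∧ c (pe σ M38 hi38) = true) :=
    pairlem hc _ _ (pe_orth σ hi11 hi38 (by decide)) (pe_orth σ hi38 hi11 (by decide))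
  have hp47 : ¬(c (pe σ M12 hi12) = true ∧ c (pe σ M28 hi28) = true) :=
    pairlem hc _ _ (pe_orth σ hi12 hi28 (by decide)) (pe_orth σ hi28 hi12 (by decide))
  have hp48 : ¬(c (pe σ M12 hi12) = true ∧ c (pe σ M34 hi34) = true) :=
    pairlem hc _ _ (pe_orth σ hi12 hi34 (by decide)) (pe_orth σ hi34 hi12 (by decide))
  have hp49 : ¬(c (pe σ M12 hi12) = true ∧ c (pe σ M36 hi36) = true) :=
    pairlem hc _ _ (pe_orth σ hi12 hi36 (by decide)) (pe_orth σ hi36 hi12 (by decide))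
  have hp50 : ¬(c (pe σ M13 hi13) = true ∧ c (pe σ M20 hi20) = true) :=
    pairlem hc _ _ (pe_orth σ hi13 hi20 (by decide)) (pe_orth σ hi20 hi13 (by decide))
  have hp51 : ¬(c (pe σ M13 hi13) = true ∧ c (pe σ M27 hi27) = true) :=
    pairlem hc _ _ (pe_orth σ hi13 hi27 (by decide)) (pe_orth σ hi27 hi13 (by decide))
  have hp52 : ¬(c (pe σ M13 hi13) = true ∧ c (pe σ M37 hi37) = true) :=
    pairlem hc _ _ (pe_orth σ hi13 hi37 (by decide)) (pe_orth σ hi37 hi13 (by decide))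
  have hp53 : ¬(c (pe σ M14 hi14) = true ∧ c (pe σ M24 hi24) = true) :=
    pairlem hc _ _ (pe_orth σ hi14 hi24 (by decide)) (pe_orth σ hi24 hi14 (by decide))
  have hp54 : ¬(c (pe σ M14 hi14) = true ∧ c (pe σ M27 hi27) = true) :=
    pairlem hc _ _ (pe_orth σ hi14 hi27 (by decide)) (pe_orth σ hi27 hi14 (by decide))
  have hp55 : ¬(c (pe σ M14 hi14) = true ∧ c (pe σ M36 hi36) = true) :=
    pairlem hc _ _ (pe_orth σ hi14 hi36 (by decide)) (pe_orth σ hi36 hi14 (by decide))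
  have hp56 : ¬(c (pe σ M15 hi15) = true ∧ c (pe σ M18 hi18) = true) :=
    pairlem hc _ _ (pe_orth σ hi15 hi18 (by decide)) (pe_orth σ hi18 hi15 (by decide))
  have hp57 : ¬(c (pe σ M15 hi15) = true ∧ c (pe σ M33 hi33) = true) :=
    pairlem hc _ _ (pe_orth σ hi15 hi33 (by decide)) (pe_orth σ hi33 hi15 (by decide))
  have hp58 : ¬(c (pe σ M16 hi16) = true ∧ c (pe σ M17 hi17) = true) :=
    pairlem hc _ _ (pe_orth σ hi16 hi17 (by decide)) (pe_orth σ hi17 hi16 (by decide))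
  have hp59 : ¬(c (pe σ M16 hi16) = true ∧ c (pe σ M23 hi23) = true) :=
    pairlem hc _ _ (pe_orth σ hi16 hi23 (by decide)) (pe_orth σ hi23 hi16 (by decide))
  have hp60 : ¬(c (pe σ M16 hi16) = true ∧ c (pe σ M34 hi34) = true) :=
    pairlem hc _ _ (pe_orth σ hi16 hi34 (by decide)) (pe_orth σ hi34 hi16 (by decide))
  have hp61 : ¬(c (pe σ M16 hi16) = true ∧ c (pe σ M37 hi37) = true) :=
    pairlem hc _ _ (pe_orth σ hi16 hi37 (by decide)) (pe_orth σ hi37 hi16 (by decide))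
  have hp62 : ¬(c (pe σ M17 hi17) = true ∧ c (pe σ M34 hi34) = true) :=
    pairlem hc _ _ (pe_orth σ hi17 hi34 (by decide)) (pe_orth σ hi34 hi17 (by decide))
  have hp63 : ¬(c (pe σ M17 hi17) = true ∧ c (pe σ M38 hi38) = true) :=
    pairlem hc _ _ (pe_orth σ hi17 hi38 (by decide)) (pe_orth σ hi38 hi17 (by decide))
  have hp64 : ¬(c (pe σ M17 hi17) = true ∧ c (pe σ M39 hi39) = true) :=
    pairlem hc _ _ (pe_orth σ hi17 hi39 (by decide)) (pe_orth σ hi39 hi17 (by decide))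
  have hp65 : ¬(c (pe σ M18 hi18) = true ∧ c (pe σ M33 hi33) = true) :=
    pairlem hc _ _ (pe_orth σ hi18 hi33 (by decide)) (pe_orth σ hi33 hi18 (by decide))
  have hp66 : ¬(c (pe σ M18 hi18) = true ∧ c (pe σ M34 hi34) = true) :=
    pairlem hc _ _ (pe_orth σ hi18 hi34 (by decide)) (pe_orth σ hi34 hi18 (by decide))
  have hp67 : ¬(c (pe σ M19 hi19) = true ∧ c (pe σ M31 hi31) = true) :=
    pairlem hc _ _ (pe_orth σ hi19 hi31 (by decide)) (pe_orth σ hi31 hi19 (by decide))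
  have hp68 : ¬(c (pe σ M19 hi19) = true ∧ c (pe σ M34 hi34) = true) :=
    pairlem hc _ _ (pe_orth σ hi19 hi34 (by decide)) (pe_orth σ hi34 hi19 (by decide))
  have hp69 : ¬(c (pe σ M19 hi19) = true ∧ c (pe σ M35 hi35) = true) :=
    pairlem hc _ _ (pe_orth σ hi19 hi35 (by decide)) (pe_orth σ hi35 hi19 (by decide))
  have hp70 : ¬(c (pe σ M19 hi19) = true ∧ c (pe σ M39 hi39) = true) :=
    pairlem hc _ _ (pe_orth σ hi19 hi39 (by decide)) (pe_orth σ hi39 hi19 (by decide))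
  have hp71 : ¬(c (pe σ M20 hi20) = true ∧ c (pe σ M34 hi34) = true) :=
    pairlem hc _ _ (pe_orth σ hi20 hi34 (by decide)) (pe_orth σ hi34 hi20 (by decide))
  have hp72 : ¬(c (pe σ M20 hi20) = true ∧ c (pe σ M35 hi35) = true) :=
    pairlem hc _ _ (pe_orth σ hi20 hi35 (by decide)) (pe_orth σ hi35 hi20 (by decide))
  have hp73 : ¬(c (pe σ M21 hi21) = true ∧ c (pe σ M34 hi34) = true) :=
    pairlem hc _ _ (pe_orth σ hi21 hi34 (by decide)) (pe_orth σ hi34 hi21 (by decide))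
  have hp74 : ¬(c (pe σ M21 hi21) = true ∧ c (pe σ M36 hi36) = true) :=
    pairlem hc _ _ (pe_orth σ hi21 hi36 (by decide)) (pe_orth σ hi36 hi21 (by decide))
  have hp75 : ¬(c (pe σ M22 hi22) = true ∧ c (pe σ M23 hi23) = true) :=
    pairlem hc _ _ (pe_orth σ hi22 hi23 (by decide)) (pe_orth σ hi23 hi22 (by decide))
  have hp76 : ¬(c (pe σ M22 hi22) = true ∧ c (pe σ M28 hi28) = true) :=
    pairlem hc _ _ (pe_orth σ hi22 hi28 (by decide)) (pe_orth σ hi28 hi22 (by decide))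
  have hp77 : ¬(c (pe σ M22 hi22) = true ∧ c (pe σ M31 hi31) = true) :=
    pairlem hc _ _ (pe_orth σ hi22 hi31 (by decide)) (pe_orth σ hi31 hi22 (by decide))
  have hp78 : ¬(c (pe σ M23 hi23) = true ∧ c (pe σ M28 hi28) = true) :=
    pairlem hc _ _ (pe_orth σ hi23 hi28 (by decide)) (pe_orth σ hi28 hi23 (by decide))
  have hp79 : ¬(c (pe σ M23 hi23) = true ∧ c (pe σ M30 hi30) = true) :=
    pairlem hc _ _ (pe_orth σ hi23 hi30 (by decide)) (pe_orth σ hi30 hi23 (by decide))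
  have hp80 : ¬(c (pe σ M24 hi24) = true ∧ c (pe σ M27 hi27) = true) :=
    pairlem hc _ _ (pe_orth σ hi24 hi27 (by decide)) (pe_orth σ hi27 hi24 (by decide))
  have hp81 : ¬(c (pe σ M24 hi24) = true ∧ c (pe σ M28 hi28) = true) :=
    pairlem hc _ _ (pe_orth σ hi24 hi28 (by decide)) (pe_orth σ hi28 hi24 (by decide))
  have hp82 : ¬(c (pe σ M24 hi24) = true ∧ c (pe σ M29 hi29) = true) :=
    pairlem hc _ _ (pe_orth σ hi24 hi29 (by decide)) (pe_orth σ hi29 hi24 (by decide))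
  have hp83 : ¬(c (pe σ M24 hi24) = true ∧ c (pe σ M39 hi39) = true) :=
    pairlem hc _ _ (pe_orth σ hi24 hi39 (by decide)) (pe_orth σ hi39 hi24 (by decide))
  have hp84 : ¬(c (pe σ M25 hi25) = true ∧ c (pe σ M28 hi28) = true) :=
    pairlem hc _ _ (pe_orth σ hi25 hi28 (by decide)) (pe_orth σ hi28 hi25 (by decide))
  have hp85 : ¬(c (pe σ M25 hi25) = true ∧ c (pe σ M29 hi29) = true) :=
    pairlem hc _ _ (pe_orth σ hi25 hi29 (by decide)) (pe_orth σ hi29 hi25 (by decide))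
  have hp86 : ¬(c (pe σ M26 hi26) = true ∧ c (pe σ M29 hi29) = true) :=
    pairlem hc _ _ (pe_orth σ hi26 hi29 (by decide)) (pe_orth σ hi29 hi26 (by decide))
  have hp87 : ¬(c (pe σ M26 hi26) = true ∧ c (pe σ M31 hi31) = true) :=
    pairlem hc _ _ (pe_orth σ hi26 hi31 (by decide)) (pe_orth σ hi31 hi26 (by decide))
  have hp88 : ¬(c (pe σ M27 hi27) = true ∧ c (pe σ M30 hi30) = true) :=
    pairlem hc _ _ (pe_orth σ hi27 hi30 (by decide)) (pe_orth σ hi30 hi27 (by decide))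
  have hp89 : ¬(c (pe σ M27 hi27) = true ∧ c (pe σ M40 hi40) = true) :=
    pairlem hc _ _ (pe_orth σ hi27 hi40 (by decide)) (pe_orth σ hi40 hi27 (by decide))
  have hp90 : ¬(c (pe σ M29 hi29) = true ∧ c (pe σ M32 hi32) = true) :=
    pairlem hc _ _ (pe_orth σ hi29 hi32 (by decide)) (pe_orth σ hi32 hi29 (by decide))
  have hp91 : ¬(c (pe σ M30 hi30) = true ∧ c (pe σ M32 hi32) = true) :=
    pairlem hc _ _ (pe_orth σ hi30 hi32 (by decide)) (pe_orth σ hi32 hi30 (by decide))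
  rcases Bool.eq_false_or_eq_true (c (pe σ M15 hi15)) with hd0 | hd0
  · have hx0 : c (pe σ M8 hi8) = false := bpq hp34 hd0
    have hx1 : c (pe σ M18 hi18) = false := bpp hp56 hd0
    have hx2 : c (pe σ M33 hi33) = false := bpp hp57 hd0
    rcases Bool.eq_false_or_eq_true (c (pe σ M10 hi10)) with hd1 | hd1
    · have hx3 : c (pe σ M25 hi25) = false := bpp hp41 hd1
      have hx4 : c (pe σ M29 hi29) = false := bpp hp42 hd1
      have hx5 : c (pe σ M35 hi35) = false := bpp hp43 hd1
      rcases Bool.eq_false_or_eq_true (c (pe σ M6 hi6)) with hd2 | hd2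
      · have hx6 : c (pe σ M11 hi11) = false := bpp hp20 hd2
        have hx7 : c (pe σ M13 hi13) = false := bpp hp21 hd2
        have hx8 : c (pe σ M23 hi23) = false := bpp hp22 hd2
        have hx9 : c (pe σ M30 hi30) = false := bpp hp23 hd2
        have hx10 : c (pe σ M36 hi36) = false := bpp hp24 hd2
        have hx11 : c (pe σ M37 hi37) = false := bpp hp25 hd2
        have hx12 : c (pe σ M38 hi38) = false := bpp hp26 hd2
        have hx13 : c (pe σ M12 hi12) = true := br2 hr10 hx0 hx10
        have hx14 : c (pe σ M28 hi28) = false := bpp hp47 hx13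
        have hx15 : c (pe σ M34 hi34) = false := bpp hp48 hx13
        have hx16 : c (pe σ M20 hi20) = true := br2 hr5 hx6 hx15
        have hx17 : c (pe σ M22 hi22) = true := br1 hr8 hx8 hx14
        have hx18 : c (pe σ M1 hi1) = false := bpq hp4 hx16
        have hx19 : c (pe σ M7 hi7) = false := bpq hp29 hx17
        have hx20 : c (pe σ M31 hi31) = false := bpp hp77 hx17
        have hx21 : c (pe σ M9 hi9) = true := br2 hr3 hx19 hx12
        have hx22 : c (pe σ M26 hi26) = true := br2 hr9 hx18 hx20
        have hx23 : c (pe σ M19 hi19) = false := bpp hp36 hx21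
        exact bc2 hp37 hx21 hx22
      · rcases Bool.eq_false_or_eq_true (c (pe σ M13 hi13)) with hd3 | hd3
        · have hx24 : c (pe σ M20 hi20) = false := bpp hp50 hd3
          have hx25 : c (pe σ M27 hi27) = false := bpp hp51 hd3
          have hx26 : c (pe σ M37 hi37) = false := bpp hp52 hd3
          rcases Bool.eq_false_or_eq_true (c (pe σ M7 hi7)) with hd4 | hd4
          · have hx27 : c (pe σ M9 hi9) = false := bpp hp27 hd4
            have hx28 : c (pe σ M14 hi14) = false := bpp hp28 hd4
            have hx29 : c (pe σ M22 hi22) = false := bpp hp29 hd4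
            have hx30 : c (pe σ M38 hi38) = false := bpp hp30 hd4
            have hx31 : c (pe σ M40 hi40) = false := bpp hp31 hd4
            have hx32 : c (pe σ M19 hi19) = true := br2 hr7 hx27 hx5
            have hx33 : c (pe σ M24 hi24) = true := br2 hr11 hx28 hx25
            have hx34 : c (pe σ M2 hi2) = false := bpq hp7 hx32
            have hx35 : c (pe σ M31 hi31) = false := bpp hp67 hx32
            have hx36 : c (pe σ M34 hi34) = false := bpp hp68 hx32
            have hx37 : c (pe σ M39 hi39) = false := bpp hp70 hx32
            have hx38 : c (pe σ M28 hi28) = false := bpp hp81 hx33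
            have hx39 : c (pe σ M11 hi11) = true := br1 hr5 hx24 hx36
            have hx40 : c (pe σ M23 hi23) = true := br2 hr8 hx29 hx38
            have hx41 : c (pe σ M0 hi0) = false := bpq hp1 hx40
            have hx42 : c (pe σ M3 hi3) = false := bpq hp12 hx40
            have hx43 : c (pe σ M16 hi16) = false := bpq hp59 hx40
            have hx44 : c (pe σ M30 hi30) = false := bpp hp79 hx40
            have hx45 : c (pe σ M32 hi32) = true := br3 hr4 hx41 hx4
            have hx46 : c (pe σ M5 hi5) = true := br2 hr6 hx42 hx31
            have hx47 : c (pe σ M17 hi17) = true := br2 hr12 hx43 hx36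
            exact bc2 hp17 hx46 hx45
          · rcases Bool.eq_false_or_eq_true (c (pe σ M9 hi9)) with hd5 | hd5
            · have hx48 : c (pe σ M19 hi19) = false := bpp hp36 hd5
              have hx49 : c (pe σ M26 hi26) = false := bpp hp37 hd5
              have hx50 : c (pe σ M38 hi38) = false := bpp hp40 hd5
              rcases Bool.eq_false_or_eq_true (c (pe σ M0 hi0)) with hd6 | hd6
              · have hx51 : c (pe σ M1 hi1) = false := bpp hp0 hd6
                have hx52 : c (pe σ M23 hi23) = false := bpp hp1 hd6
                have hx53 : c (pe σ M32 hi32) = false := bpp hp3 hd6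
                have hx54 : c (pe σ M31 hi31) = true := br3 hr9 hx51 hx49
                have hx55 : c (pe σ M30 hi30) = true := br3 hr15 hd2 hx52
                have hx56 : c (pe σ M22 hi22) = false := bpq hp77 hx54
                have hx57 : c (pe σ M28 hi28) = true := br3 hr8 hx56 hx52
                have hx58 : c (pe σ M12 hi12) = false := bpq hp47 hx57
                have hx59 : c (pe σ M24 hi24) = false := bpq hp81 hx57
                have hx60 : c (pe σ M36 hi36) = true := br3 hr10 hx0 hx58
                have hx61 : c (pe σ M14 hi14) = true := br1 hr11 hx59 hx25
                have hx62 : c (pe σ M4 hi4) = false := bpq hp16 hx60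
                exact bc2 hp55 hx61 hx60
              · have hx63 : c (pe σ M32 hi32) = true := br3 hr4 hd6 hx4
                have hx64 : c (pe σ M5 hi5) = false := bpq hp17 hx63
                have hx65 : c (pe σ M30 hi30) = false := bpq hp91 hx63
                have hx66 : c (pe σ M23 hi23) = true := br2 hr15 hd2 hx65
                have hx67 : c (pe σ M3 hi3) = false := bpq hp12 hx66
                have hx68 : c (pe σ M16 hi16) = false := bpq hp59 hx66
                have hx69 : c (pe σ M22 hi22) = false := bpq hp75 hx66
                have hx70 : c (pe σ M28 hi28) = false := bpp hp78 hx66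
                have hx71 : c (pe σ M40 hi40) = true := br3 hr6 hx67 hx64
                have hx72 : c (pe σ M2 hi2) = false := bpq hp10 hx71
                have hx73 : c (pe σ M39 hi39) = true := br3 hr13 hx72 hx48
                have hx74 : c (pe σ M17 hi17) = false := bpq hp64 hx73
                have hx75 : c (pe σ M24 hi24) = false := bpq hp83 hx73
                have hx76 : c (pe σ M14 hi14) = true := br1 hr11 hx75 hx25
                have hx77 : c (pe σ M34 hi34) = true := br3 hr12 hx68 hx74
                have hx78 : c (pe σ M11 hi11) = false := bpq hp45 hx77
                have hx79 : c (pe σ M12 hi12) = false := bpq hp48 hx77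
                have hx80 : c (pe σ M36 hi36) = false := bpp hp55 hx76
                have hx81 : c (pe σ M21 hi21) = false := bpq hp73 hx77
                exact bc3 hr10 hx0 hx79 hx80
            · have hx82 : c (pe σ M38 hi38) = true := br3 hr3 hd4 hd5
              have hx83 : c (pe σ M19 hi19) = true := br2 hr7 hd5 hx5
              have hx84 : c (pe σ M2 hi2) = false := bpq hp7 hx83
              have hx85 : c (pe σ M11 hi11) = false := bpq hp46 hx82
              have hx86 : c (pe σ M17 hi17) = false := bpq hp63 hx82
              have hx87 : c (pe σ M31 hi31) = false := bpp hp67 hx83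
              have hx88 : c (pe σ M34 hi34) = false := bpp hp68 hx83
              have hx89 : c (pe σ M39 hi39) = false := bpp hp70 hx83
              exact bc3 hr5 hx85 hx24 hx88
        · have hx90 : c (pe σ M37 hi37) = true := br3 hr2 hd2 hd3
          have hx91 : c (pe σ M5 hi5) = false := bpq hp18 hx90
          have hx92 : c (pe σ M16 hi16) = false := bpq hp61 hx90
          rcases Bool.eq_false_or_eq_true (c (pe σ M7 hi7)) with hd7 | hd7
          · have hx93 : c (pe σ M9 hi9) = false := bpp hp27 hd7
            have hx94 : c (pe σ M14 hi14) = false := bpp hp28 hd7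
            have hx95 : c (pe σ M22 hi22) = false := bpp hp29 hd7
            have hx96 : c (pe σ M38 hi38) = false := bpp hp30 hd7
            have hx97 : c (pe σ M40 hi40) = false := bpp hp31 hd7
            have hx98 : c (pe σ M3 hi3) = true := br1 hr6 hx91 hx97
            have hx99 : c (pe σ M19 hi19) = true := br2 hr7 hx93 hx5
            have hx100 : c (pe σ M2 hi2) = false := bpq hp7 hx99
            have hx101 : c (pe σ M23 hi23) = false := bpp hp12 hx98
            have hx102 : c (pe σ M31 hi31) = false := bpp hp67 hx99
            have hx103 : c (pe σ M34 hi34) = false := bpp hp68 hx99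
            have hx104 : c (pe σ M39 hi39) = false := bpp hp70 hx99
            have hx105 : c (pe σ M28 hi28) = true := br3 hr8 hx95 hx101
            have hx106 : c (pe σ M17 hi17) = true := br2 hr12 hx92 hx103
            have hx107 : c (pe σ M30 hi30) = true := br3 hr15 hd2 hx101
            have hx108 : c (pe σ M12 hi12) = false := bpq hp47 hx105
            have hx109 : c (pe σ M24 hi24) = false := bpq hp81 hx105
            have hx110 : c (pe σ M27 hi27) = false := bpq hp88 hx107
            have hx111 : c (pe σ M32 hi32) = false := bpp hp91 hx107
            have hx112 : c (pe σ M0 hi0) = true := br1 hr4 hx4 hx111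
            have hx113 : c (pe σ M36 hi36) = true := br3 hr10 hx0 hx108
            exact bc3 hr11 hx94 hx109 hx110
          · rcases Bool.eq_false_or_eq_true (c (pe σ M9 hi9)) with hd8 | hd8
            · have hx114 : c (pe σ M19 hi19) = false := bpp hp36 hd8
              have hx115 : c (pe σ M26 hi26) = false := bpp hp37 hd8
              have hx116 : c (pe σ M38 hi38) = false := bpp hp40 hd8
              rcases Bool.eq_false_or_eq_true (c (pe σ M0 hi0)) with hd9 | hd9
              · have hx117 : c (pe σ M1 hi1) = false := bpp hp0 hd9
                have hx118 : c (pe σ M23 hi23) = false := bpp hp1 hd9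
                have hx119 : c (pe σ M32 hi32) = false := bpp hp3 hd9
                have hx120 : c (pe σ M31 hi31) = true := br3 hr9 hx117 hx115
                have hx121 : c (pe σ M30 hi30) = true := br3 hr15 hd2 hx118
                have hx122 : c (pe σ M22 hi22) = false := bpq hp77 hx120
                have hx123 : c (pe σ M27 hi27) = false := bpq hp88 hx121
                have hx124 : c (pe σ M28 hi28) = true := br3 hr8 hx122 hx118
                have hx125 : c (pe σ M12 hi12) = false := bpq hp47 hx124
                have hx126 : c (pe σ M24 hi24) = false := bpq hp81 hx124
                have hx127 : c (pe σ M36 hi36) = true := br3 hr10 hx0 hx125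
                have hx128 : c (pe σ M14 hi14) = true := br1 hr11 hx126 hx123
                have hx129 : c (pe σ M4 hi4) = false := bpq hp16 hx127
                exact bc2 hp55 hx128 hx127
              · have hx130 : c (pe σ M32 hi32) = true := br3 hr4 hd9 hx4
                have hx131 : c (pe σ M30 hi30) = false := bpq hp91 hx130
                have hx132 : c (pe σ M23 hi23) = true := br2 hr15 hd2 hx131
                have hx133 : c (pe σ M3 hi3) = false := bpq hp12 hx132
                have hx134 : c (pe σ M22 hi22) = false := bpq hp75 hx132
                have hx135 : c (pe σ M28 hi28) = false := bpp hp78 hx132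
                have hx136 : c (pe σ M40 hi40) = true := br3 hr6 hx133 hx91
                have hx137 : c (pe σ M2 hi2) = false := bpq hp10 hx136
                have hx138 : c (pe σ M27 hi27) = false := bpq hp89 hx136
                have hx139 : c (pe σ M39 hi39) = true := br3 hr13 hx137 hx114
                have hx140 : c (pe σ M17 hi17) = false := bpq hp64 hx139
                have hx141 : c (pe σ M24 hi24) = false := bpq hp83 hx139
                have hx142 : c (pe σ M14 hi14) = true := br1 hr11 hx141 hx138
                have hx143 : c (pe σ M34 hi34) = true := br3 hr12 hx92 hx140
                have hx144 : c (pe σ M11 hi11) = false := bpq hp45 hx143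
                have hx145 : c (pe σ M12 hi12) = false := bpq hp48 hx143
                have hx146 : c (pe σ M36 hi36) = false := bpp hp55 hx142
                have hx147 : c (pe σ M20 hi20) = false := bpq hp71 hx143
                have hx148 : c (pe σ M21 hi21) = false := bpq hp73 hx143
                exact bc3 hr10 hx0 hx145 hx146
            · have hx149 : c (pe σ M38 hi38) = true := br3 hr3 hd7 hd8
              have hx150 : c (pe σ M19 hi19) = true := br2 hr7 hd8 hx5
              have hx151 : c (pe σ M2 hi2) = false := bpq hp7 hx150
              have hx152 : c (pe σ M11 hi11) = false := bpq hp46 hx149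
              have hx153 : c (pe σ M17 hi17) = false := bpq hp63 hx149
              have hx154 : c (pe σ M31 hi31) = false := bpp hp67 hx150
              have hx155 : c (pe σ M34 hi34) = false := bpp hp68 hx150
              have hx156 : c (pe σ M39 hi39) = false := bpp hp70 hx150
              have hx157 : c (pe σ M20 hi20) = true := br2 hr5 hx152 hx155
              exact bc3 hr12 hx92 hx153 hx155
    · rcases Bool.eq_false_or_eq_true (c (pe σ M25 hi25)) with hd10 | hd10
      · have hx158 : c (pe σ M2 hi2) = false := bpq hp8 hd10
        have hx159 : c (pe σ M28 hi28) = false := bpp hp84 hd10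
        have hx160 : c (pe σ M29 hi29) = false := bpp hp85 hd10
        rcases Bool.eq_false_or_eq_true (c (pe σ M6 hi6)) with hd11 | hd11
        · have hx161 : c (pe σ M11 hi11) = false := bpp hp20 hd11
          have hx162 : c (pe σ M13 hi13) = false := bpp hp21 hd11
          have hx163 : c (pe σ M23 hi23) = false := bpp hp22 hd11
          have hx164 : c (pe σ M30 hi30) = false := bpp hp23 hd11
          have hx165 : c (pe σ M36 hi36) = false := bpp hp24 hd11
          have hx166 : c (pe σ M37 hi37) = false := bpp hp25 hd11
          have hx167 : c (pe σ M38 hi38) = false := bpp hp26 hd11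
          have hx168 : c (pe σ M22 hi22) = true := br1 hr8 hx163 hx159
          have hx169 : c (pe σ M12 hi12) = true := br2 hr10 hx0 hx165
          have hx170 : c (pe σ M7 hi7) = false := bpq hp29 hx168
          have hx171 : c (pe σ M34 hi34) = false := bpp hp48 hx169
          have hx172 : c (pe σ M31 hi31) = false := bpp hp77 hx168
          have hx173 : c (pe σ M9 hi9) = true := br2 hr3 hx170 hx167
          have hx174 : c (pe σ M20 hi20) = true := br2 hr5 hx161 hx171
          have hx175 : c (pe σ M1 hi1) = false := bpq hp4 hx174
          have hx176 : c (pe σ M19 hi19) = false := bpp hp36 hx173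
          have hx177 : c (pe σ M26 hi26) = false := bpp hp37 hx173
          have hx178 : c (pe σ M35 hi35) = false := bpp hp39 hx173
          exact bc3 hr9 hx175 hx177 hx172
        · rcases Bool.eq_false_or_eq_true (c (pe σ M13 hi13)) with hd12 | hd12
          · have hx179 : c (pe σ M20 hi20) = false := bpp hp50 hd12
            have hx180 : c (pe σ M27 hi27) = false := bpp hp51 hd12
            have hx181 : c (pe σ M37 hi37) = false := bpp hp52 hd12
            rcases Bool.eq_false_or_eq_true (c (pe σ M7 hi7)) with hd13 | hd13
            · have hx182 : c (pe σ M9 hi9) = false := bpp hp27 hd13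
              have hx183 : c (pe σ M14 hi14) = false := bpp hp28 hd13
              have hx184 : c (pe σ M22 hi22) = false := bpp hp29 hd13
              have hx185 : c (pe σ M38 hi38) = false := bpp hp30 hd13
              have hx186 : c (pe σ M40 hi40) = false := bpp hp31 hd13
              have hx187 : c (pe σ M23 hi23) = true := br2 hr8 hx184 hx159
              have hx188 : c (pe σ M24 hi24) = true := br2 hr11 hx183 hx180
              have hx189 : c (pe σ M0 hi0) = false := bpq hp1 hx187
              have hx190 : c (pe σ M3 hi3) = false := bpq hp12 hx187
              have hx191 : c (pe σ M16 hi16) = false := bpq hp59 hx187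
              have hx192 : c (pe σ M30 hi30) = false := bpp hp79 hx187
              have hx193 : c (pe σ M39 hi39) = false := bpp hp83 hx188
              have hx194 : c (pe σ M32 hi32) = true := br3 hr4 hx189 hx160
              have hx195 : c (pe σ M5 hi5) = true := br2 hr6 hx190 hx186
              have hx196 : c (pe σ M19 hi19) = true := br2 hr13 hx158 hx193
              exact bc2 hp17 hx195 hx194
            · rcases Bool.eq_false_or_eq_true (c (pe σ M9 hi9)) with hd14 | hd14
              · have hx197 : c (pe σ M19 hi19) = false := bpp hp36 hd14
                have hx198 : c (pe σ M26 hi26) = false := bpp hp37 hd14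
                have hx199 : c (pe σ M35 hi35) = false := bpp hp39 hd14
                have hx200 : c (pe σ M38 hi38) = false := bpp hp40 hd14
                have hx201 : c (pe σ M39 hi39) = true := br3 hr13 hx158 hx197
                have hx202 : c (pe σ M17 hi17) = false := bpq hp64 hx201
                have hx203 : c (pe σ M24 hi24) = false := bpq hp83 hx201
                have hx204 : c (pe σ M14 hi14) = true := br1 hr11 hx203 hx180
                have hx205 : c (pe σ M36 hi36) = false := bpp hp55 hx204
                have hx206 : c (pe σ M12 hi12) = true := br2 hr10 hx0 hx205
                have hx207 : c (pe σ M34 hi34) = false := bpp hp48 hx206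
                have hx208 : c (pe σ M11 hi11) = true := br1 hr5 hx179 hx207
                have hx209 : c (pe σ M16 hi16) = true := br1 hr12 hx202 hx207
                have hx210 : c (pe σ M23 hi23) = false := bpp hp59 hx209
                have hx211 : c (pe σ M22 hi22) = true := br1 hr8 hx210 hx159
                have hx212 : c (pe σ M30 hi30) = true := br3 hr15 hd11 hx210
                have hx213 : c (pe σ M31 hi31) = false := bpp hp77 hx211
                have hx214 : c (pe σ M32 hi32) = false := bpp hp91 hx212
                have hx215 : c (pe σ M0 hi0) = true := br1 hr4 hx160 hx214
                have hx216 : c (pe σ M1 hi1) = true := br1 hr9 hx198 hx213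
                exact bc2 hp0 hx215 hx216
              · have hx217 : c (pe σ M38 hi38) = true := br3 hr3 hd13 hd14
                have hx218 : c (pe σ M11 hi11) = false := bpq hp46 hx217
                have hx219 : c (pe σ M17 hi17) = false := bpq hp63 hx217
                have hx220 : c (pe σ M34 hi34) = true := br3 hr5 hx218 hx179
                have hx221 : c (pe σ M12 hi12) = false := bpq hp48 hx220
                have hx222 : c (pe σ M16 hi16) = false := bpq hp60 hx220
                have hx223 : c (pe σ M19 hi19) = false := bpq hp68 hx220
                have hx224 : c (pe σ M21 hi21) = false := bpq hp73 hx220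
                have hx225 : c (pe σ M35 hi35) = true := br3 hr7 hd14 hx223
                have hx226 : c (pe σ M36 hi36) = true := br3 hr10 hx0 hx221
                have hx227 : c (pe σ M39 hi39) = true := br3 hr13 hx158 hx223
                have hx228 : c (pe σ M4 hi4) = false := bpq hp16 hx226
                have hx229 : c (pe σ M14 hi14) = false := bpq hp55 hx226
                have hx230 : c (pe σ M24 hi24) = false := bpq hp83 hx227
                exact bc3 hr11 hx229 hx230 hx180
          · have hx231 : c (pe σ M37 hi37) = true := br3 hr2 hd11 hd12
            have hx232 : c (pe σ M5 hi5) = false := bpq hp18 hx231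
            have hx233 : c (pe σ M16 hi16) = false := bpq hp61 hx231
            rcases Bool.eq_false_or_eq_true (c (pe σ M7 hi7)) with hd15 | hd15
            · have hx234 : c (pe σ M9 hi9) = false := bpp hp27 hd15
              have hx235 : c (pe σ M14 hi14) = false := bpp hp28 hd15
              have hx236 : c (pe σ M22 hi22) = false := bpp hp29 hd15
              have hx237 : c (pe σ M38 hi38) = false := bpp hp30 hd15
              have hx238 : c (pe σ M40 hi40) = false := bpp hp31 hd15
              have hx239 : c (pe σ M3 hi3) = true := br1 hr6 hx232 hx238
              have hx240 : c (pe σ M23 hi23) = true := br2 hr8 hx236 hx159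
              have hx241 : c (pe σ M0 hi0) = false := bpq hp1 hx240
              exact bc2 hp12 hx239 hx240
            · rcases Bool.eq_false_or_eq_true (c (pe σ M9 hi9)) with hd16 | hd16
              · have hx242 : c (pe σ M19 hi19) = false := bpp hp36 hd16
                have hx243 : c (pe σ M26 hi26) = false := bpp hp37 hd16
                have hx244 : c (pe σ M35 hi35) = false := bpp hp39 hd16
                have hx245 : c (pe σ M38 hi38) = false := bpp hp40 hd16
                have hx246 : c (pe σ M39 hi39) = true := br3 hr13 hx158 hx242
                have hx247 : c (pe σ M17 hi17) = false := bpq hp64 hx246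
                have hx248 : c (pe σ M24 hi24) = false := bpq hp83 hx246
                have hx249 : c (pe σ M34 hi34) = true := br3 hr12 hx233 hx247
                have hx250 : c (pe σ M11 hi11) = false := bpq hp45 hx249
                have hx251 : c (pe σ M12 hi12) = false := bpq hp48 hx249
                have hx252 : c (pe σ M20 hi20) = false := bpq hp71 hx249
                have hx253 : c (pe σ M21 hi21) = false := bpq hp73 hx249
                have hx254 : c (pe σ M36 hi36) = true := br3 hr10 hx0 hx251
                have hx255 : c (pe σ M4 hi4) = false := bpq hp16 hx254
                have hx256 : c (pe σ M14 hi14) = false := bpq hp55 hx254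
                have hx257 : c (pe σ M27 hi27) = true := br3 hr11 hx256 hx248
                have hx258 : c (pe σ M30 hi30) = false := bpp hp88 hx257
                have hx259 : c (pe σ M40 hi40) = false := bpp hp89 hx257
                have hx260 : c (pe σ M3 hi3) = true := br1 hr6 hx232 hx259
                have hx261 : c (pe σ M23 hi23) = true := br2 hr15 hd11 hx258
                have hx262 : c (pe σ M0 hi0) = false := bpq hp1 hx261
                exact bc2 hp12 hx260 hx261
              · have hx263 : c (pe σ M38 hi38) = true := br3 hr3 hd15 hd16
                have hx264 : c (pe σ M11 hi11) = false := bpq hp46 hx263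
                have hx265 : c (pe σ M17 hi17) = false := bpq hp63 hx263
                have hx266 : c (pe σ M34 hi34) = true := br3 hr12 hx233 hx265
                have hx267 : c (pe σ M12 hi12) = false := bpq hp48 hx266
                have hx268 : c (pe σ M19 hi19) = false := bpq hp68 hx266
                have hx269 : c (pe σ M20 hi20) = false := bpq hp71 hx266
                have hx270 : c (pe σ M21 hi21) = false := bpq hp73 hx266
                have hx271 : c (pe σ M35 hi35) = true := br3 hr7 hd16 hx268
                have hx272 : c (pe σ M36 hi36) = true := br3 hr10 hx0 hx267
                have hx273 : c (pe σ M39 hi39) = true := br3 hr13 hx158 hx268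
                have hx274 : c (pe σ M4 hi4) = false := bpq hp16 hx272
                have hx275 : c (pe σ M14 hi14) = false := bpq hp55 hx272
                have hx276 : c (pe σ M24 hi24) = false := bpq hp83 hx273
                have hx277 : c (pe σ M27 hi27) = true := br3 hr11 hx275 hx276
                have hx278 : c (pe σ M30 hi30) = false := bpp hp88 hx277
                have hx279 : c (pe σ M40 hi40) = false := bpp hp89 hx277
                have hx280 : c (pe σ M3 hi3) = true := br1 hr6 hx232 hx279
                have hx281 : c (pe σ M23 hi23) = true := br2 hr15 hd11 hx278
                have hx282 : c (pe σ M0 hi0) = false := bpq hp1 hx281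
                exact bc2 hp12 hx280 hx281
      · have hx283 : c (pe σ M29 hi29) = true := br3 hr1 hd1 hd10
        have hx284 : c (pe σ M0 hi0) = false := bpq hp2 hx283
        have hx285 : c (pe σ M9 hi9) = false := bpq hp38 hx283
        have hx286 : c (pe σ M24 hi24) = false := bpq hp82 hx283
        have hx287 : c (pe σ M26 hi26) = false := bpq hp86 hx283
        have hx288 : c (pe σ M32 hi32) = false := bpp hp90 hx283
        rcases Bool.eq_false_or_eq_true (c (pe σ M6 hi6)) with hd17 | hd17
        · have hx289 : c (pe σ M11 hi11) = false := bpp hp20 hd17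
          have hx290 : c (pe σ M13 hi13) = false := bpp hp21 hd17
          have hx291 : c (pe σ M23 hi23) = false := bpp hp22 hd17
          have hx292 : c (pe σ M30 hi30) = false := bpp hp23 hd17
          have hx293 : c (pe σ M36 hi36) = false := bpp hp24 hd17
          have hx294 : c (pe σ M37 hi37) = false := bpp hp25 hd17
          have hx295 : c (pe σ M38 hi38) = false := bpp hp26 hd17
          have hx296 : c (pe σ M7 hi7) = true := br1 hr3 hx285 hx295
          have hx297 : c (pe σ M12 hi12) = true := br2 hr10 hx0 hx293
          have hx298 : c (pe σ M14 hi14) = false := bpp hp28 hx296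
          have hx299 : c (pe σ M22 hi22) = false := bpp hp29 hx296
          have hx300 : c (pe σ M40 hi40) = false := bpp hp31 hx296
          have hx301 : c (pe σ M28 hi28) = false := bpp hp47 hx297
          have hx302 : c (pe σ M34 hi34) = false := bpp hp48 hx297
          have hx303 : c (pe σ M20 hi20) = true := br2 hr5 hx289 hx302
          exact bc3 hr8 hx299 hx291 hx301
        · rcases Bool.eq_false_or_eq_true (c (pe σ M13 hi13)) with hd18 | hd18
          · have hx304 : c (pe σ M20 hi20) = false := bpp hp50 hd18
            have hx305 : c (pe σ M27 hi27) = false := bpp hp51 hd18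
            have hx306 : c (pe σ M37 hi37) = false := bpp hp52 hd18
            have hx307 : c (pe σ M14 hi14) = true := br1 hr11 hx286 hx305
            have hx308 : c (pe σ M7 hi7) = false := bpq hp28 hx307
            have hx309 : c (pe σ M36 hi36) = false := bpp hp55 hx307
            have hx310 : c (pe σ M38 hi38) = true := br3 hr3 hx308 hx285
            have hx311 : c (pe σ M12 hi12) = true := br2 hr10 hx0 hx309
            have hx312 : c (pe σ M11 hi11) = false := bpq hp46 hx310
            have hx313 : c (pe σ M28 hi28) = false := bpp hp47 hx311
            have hx314 : c (pe σ M34 hi34) = false := bpp hp48 hx311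
            have hx315 : c (pe σ M17 hi17) = false := bpq hp63 hx310
            exact bc3 hr5 hx312 hx304 hx314
          · have hx316 : c (pe σ M37 hi37) = true := br3 hr2 hd17 hd18
            have hx317 : c (pe σ M5 hi5) = false := bpq hp18 hx316
            have hx318 : c (pe σ M16 hi16) = false := bpq hp61 hx316
            rcases Bool.eq_false_or_eq_true (c (pe σ M7 hi7)) with hd19 | hd19
            · have hx319 : c (pe σ M14 hi14) = false := bpp hp28 hd19
              have hx320 : c (pe σ M22 hi22) = false := bpp hp29 hd19
              have hx321 : c (pe σ M38 hi38) = false := bpp hp30 hd19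
              have hx322 : c (pe σ M40 hi40) = false := bpp hp31 hd19
              have hx323 : c (pe σ M3 hi3) = true := br1 hr6 hx317 hx322
              have hx324 : c (pe σ M27 hi27) = true := br3 hr11 hx319 hx286
              have hx325 : c (pe σ M23 hi23) = false := bpp hp12 hx323
              have hx326 : c (pe σ M30 hi30) = false := bpp hp88 hx324
              have hx327 : c (pe σ M28 hi28) = true := br3 hr8 hx320 hx325
              exact bc3 hr15 hd17 hx325 hx326
            · have hx328 : c (pe σ M38 hi38) = true := br3 hr3 hd19 hx285
              have hx329 : c (pe σ M11 hi11) = false := bpq hp46 hx328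
              have hx330 : c (pe σ M17 hi17) = false := bpq hp63 hx328
              have hx331 : c (pe σ M34 hi34) = true := br3 hr12 hx318 hx330
              have hx332 : c (pe σ M12 hi12) = false := bpq hp48 hx331
              have hx333 : c (pe σ M19 hi19) = false := bpq hp68 hx331
              have hx334 : c (pe σ M20 hi20) = false := bpq hp71 hx331
              have hx335 : c (pe σ M21 hi21) = false := bpq hp73 hx331
              have hx336 : c (pe σ M35 hi35) = true := br3 hr7 hx285 hx333
              have hx337 : c (pe σ M36 hi36) = true := br3 hr10 hx0 hx332
              have hx338 : c (pe σ M4 hi4) = false := bpq hp16 hx337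
              have hx339 : c (pe σ M14 hi14) = false := bpq hp55 hx337
              have hx340 : c (pe σ M27 hi27) = true := br3 hr11 hx339 hx286
              have hx341 : c (pe σ M30 hi30) = false := bpp hp88 hx340
              have hx342 : c (pe σ M40 hi40) = false := bpp hp89 hx340
              have hx343 : c (pe σ M3 hi3) = true := br1 hr6 hx317 hx342
              have hx344 : c (pe σ M23 hi23) = true := br2 hr15 hd17 hx341
              exact bc2 hp12 hx343 hx344
  · rcases Bool.eq_false_or_eq_true (c (pe σ M18 hi18)) with hd20 | hd20
    · have hx345 : c (pe σ M33 hi33) = false := bpp hp65 hd20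
      have hx346 : c (pe σ M34 hi34) = false := bpp hp66 hd20
      rcases Bool.eq_false_or_eq_true (c (pe σ M10 hi10)) with hd21 | hd21
      · have hx347 : c (pe σ M8 hi8) = false := bpq hp32 hd21
        have hx348 : c (pe σ M25 hi25) = false := bpp hp41 hd21
        have hx349 : c (pe σ M29 hi29) = false := bpp hp42 hd21
        have hx350 : c (pe σ M35 hi35) = false := bpp hp43 hd21
        rcases Bool.eq_false_or_eq_true (c (pe σ M6 hi6)) with hd22 | hd22
        · have hx351 : c (pe σ M11 hi11) = false := bpp hp20 hd22
          have hx352 : c (pe σ M13 hi13) = false := bpp hp21 hd22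
          have hx353 : c (pe σ M23 hi23) = false := bpp hp22 hd22
          have hx354 : c (pe σ M30 hi30) = false := bpp hp23 hd22
          have hx355 : c (pe σ M36 hi36) = false := bpp hp24 hd22
          have hx356 : c (pe σ M37 hi37) = false := bpp hp25 hd22
          have hx357 : c (pe σ M38 hi38) = false := bpp hp26 hd22
          have hx358 : c (pe σ M20 hi20) = true := br2 hr5 hx351 hx346
          have hx359 : c (pe σ M12 hi12) = true := br2 hr10 hx347 hx355
          have hx360 : c (pe σ M1 hi1) = false := bpq hp4 hx358
          have hx361 : c (pe σ M28 hi28) = false := bpp hp47 hx359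
          have hx362 : c (pe σ M22 hi22) = true := br1 hr8 hx353 hx361
          have hx363 : c (pe σ M7 hi7) = false := bpq hp29 hx362
          have hx364 : c (pe σ M31 hi31) = false := bpp hp77 hx362
          have hx365 : c (pe σ M9 hi9) = true := br2 hr3 hx363 hx357
          have hx366 : c (pe σ M26 hi26) = true := br2 hr9 hx360 hx364
          have hx367 : c (pe σ M19 hi19) = false := bpp hp36 hx365
          exact bc2 hp37 hx365 hx366
        · rcases Bool.eq_false_or_eq_true (c (pe σ M13 hi13)) with hd23 | hd23
          · have hx368 : c (pe σ M20 hi20) = false := bpp hp50 hd23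
            have hx369 : c (pe σ M27 hi27) = false := bpp hp51 hd23
            have hx370 : c (pe σ M37 hi37) = false := bpp hp52 hd23
            have hx371 : c (pe σ M11 hi11) = true := br1 hr5 hx368 hx346
            have hx372 : c (pe σ M38 hi38) = false := bpp hp46 hx371
            rcases Bool.eq_false_or_eq_true (c (pe σ M7 hi7)) with hd24 | hd24
            · have hx373 : c (pe σ M9 hi9) = false := bpp hp27 hd24
              have hx374 : c (pe σ M14 hi14) = false := bpp hp28 hd24
              have hx375 : c (pe σ M22 hi22) = false := bpp hp29 hd24
              have hx376 : c (pe σ M40 hi40) = false := bpp hp31 hd24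
              have hx377 : c (pe σ M19 hi19) = true := br2 hr7 hx373 hx350
              have hx378 : c (pe σ M24 hi24) = true := br2 hr11 hx374 hx369
              have hx379 : c (pe σ M2 hi2) = false := bpq hp7 hx377
              have hx380 : c (pe σ M31 hi31) = false := bpp hp67 hx377
              have hx381 : c (pe σ M39 hi39) = false := bpp hp70 hx377
              have hx382 : c (pe σ M28 hi28) = false := bpp hp81 hx378
              have hx383 : c (pe σ M23 hi23) = true := br2 hr8 hx375 hx382
              have hx384 : c (pe σ M0 hi0) = false := bpq hp1 hx383
              have hx385 : c (pe σ M3 hi3) = false := bpq hp12 hx383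
              have hx386 : c (pe σ M16 hi16) = false := bpq hp59 hx383
              have hx387 : c (pe σ M30 hi30) = false := bpp hp79 hx383
              have hx388 : c (pe σ M32 hi32) = true := br3 hr4 hx384 hx349
              have hx389 : c (pe σ M5 hi5) = true := br2 hr6 hx385 hx376
              have hx390 : c (pe σ M17 hi17) = true := br2 hr12 hx386 hx346
              exact bc2 hp17 hx389 hx388
            · have hx391 : c (pe σ M9 hi9) = true := br2 hr3 hd24 hx372
              have hx392 : c (pe σ M19 hi19) = false := bpp hp36 hx391
              have hx393 : c (pe σ M26 hi26) = false := bpp hp37 hx391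
              rcases Bool.eq_false_or_eq_true (c (pe σ M0 hi0)) with hd25 | hd25
              · have hx394 : c (pe σ M1 hi1) = false := bpp hp0 hd25
                have hx395 : c (pe σ M23 hi23) = false := bpp hp1 hd25
                have hx396 : c (pe σ M32 hi32) = false := bpp hp3 hd25
                have hx397 : c (pe σ M31 hi31) = true := br3 hr9 hx394 hx393
                have hx398 : c (pe σ M30 hi30) = true := br3 hr15 hd22 hx395
                have hx399 : c (pe σ M22 hi22) = false := bpq hp77 hx397
                have hx400 : c (pe σ M28 hi28) = true := br3 hr8 hx399 hx395
                have hx401 : c (pe σ M12 hi12) = false := bpq hp47 hx400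
                have hx402 : c (pe σ M24 hi24) = false := bpq hp81 hx400
                have hx403 : c (pe σ M36 hi36) = true := br3 hr10 hx347 hx401
                have hx404 : c (pe σ M14 hi14) = true := br1 hr11 hx402 hx369
                have hx405 : c (pe σ M4 hi4) = false := bpq hp16 hx403
                exact bc2 hp55 hx404 hx403
              · have hx406 : c (pe σ M32 hi32) = true := br3 hr4 hd25 hx349
                have hx407 : c (pe σ M5 hi5) = false := bpq hp17 hx406
                have hx408 : c (pe σ M30 hi30) = false := bpq hp91 hx406
                have hx409 : c (pe σ M23 hi23) = true := br2 hr15 hd22 hx408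
                have hx410 : c (pe σ M3 hi3) = false := bpq hp12 hx409
                have hx411 : c (pe σ M16 hi16) = false := bpq hp59 hx409
                have hx412 : c (pe σ M22 hi22) = false := bpq hp75 hx409
                have hx413 : c (pe σ M28 hi28) = false := bpp hp78 hx409
                have hx414 : c (pe σ M40 hi40) = true := br3 hr6 hx410 hx407
                have hx415 : c (pe σ M17 hi17) = true := br2 hr12 hx411 hx346
                have hx416 : c (pe σ M2 hi2) = false := bpq hp10 hx414
                have hx417 : c (pe σ M39 hi39) = false := bpp hp64 hx415
                exact bc3 hr13 hx416 hx392 hx417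
          · have hx418 : c (pe σ M37 hi37) = true := br3 hr2 hd22 hd23
            have hx419 : c (pe σ M5 hi5) = false := bpq hp18 hx418
            have hx420 : c (pe σ M16 hi16) = false := bpq hp61 hx418
            have hx421 : c (pe σ M17 hi17) = true := br2 hr12 hx420 hx346
            have hx422 : c (pe σ M38 hi38) = false := bpp hp63 hx421
            have hx423 : c (pe σ M39 hi39) = false := bpp hp64 hx421
            rcases Bool.eq_false_or_eq_true (c (pe σ M7 hi7)) with hd26 | hd26
            · have hx424 : c (pe σ M9 hi9) = false := bpp hp27 hd26
              have hx425 : c (pe σ M14 hi14) = false := bpp hp28 hd26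
              have hx426 : c (pe σ M22 hi22) = false := bpp hp29 hd26
              have hx427 : c (pe σ M40 hi40) = false := bpp hp31 hd26
              have hx428 : c (pe σ M3 hi3) = true := br1 hr6 hx419 hx427
              have hx429 : c (pe σ M19 hi19) = true := br2 hr7 hx424 hx350
              have hx430 : c (pe σ M2 hi2) = false := bpq hp7 hx429
              have hx431 : c (pe σ M23 hi23) = false := bpp hp12 hx428
              have hx432 : c (pe σ M31 hi31) = false := bpp hp67 hx429
              have hx433 : c (pe σ M28 hi28) = true := br3 hr8 hx426 hx431
              have hx434 : c (pe σ M30 hi30) = true := br3 hr15 hd22 hx431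
              have hx435 : c (pe σ M12 hi12) = false := bpq hp47 hx433
              have hx436 : c (pe σ M24 hi24) = false := bpq hp81 hx433
              have hx437 : c (pe σ M27 hi27) = false := bpq hp88 hx434
              have hx438 : c (pe σ M32 hi32) = false := bpp hp91 hx434
              have hx439 : c (pe σ M0 hi0) = true := br1 hr4 hx349 hx438
              have hx440 : c (pe σ M36 hi36) = true := br3 hr10 hx347 hx435
              exact bc3 hr11 hx425 hx436 hx437
            · have hx441 : c (pe σ M9 hi9) = true := br2 hr3 hd26 hx422
              have hx442 : c (pe σ M19 hi19) = false := bpp hp36 hx441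
              have hx443 : c (pe σ M26 hi26) = false := bpp hp37 hx441
              have hx444 : c (pe σ M2 hi2) = true := br1 hr13 hx442 hx423
              have hx445 : c (pe σ M40 hi40) = false := bpp hp10 hx444
              have hx446 : c (pe σ M3 hi3) = true := br1 hr6 hx419 hx445
              have hx447 : c (pe σ M23 hi23) = false := bpp hp12 hx446
              have hx448 : c (pe σ M30 hi30) = true := br3 hr15 hd22 hx447
              have hx449 : c (pe σ M27 hi27) = false := bpq hp88 hx448
              have hx450 : c (pe σ M32 hi32) = false := bpp hp91 hx448
              have hx451 : c (pe σ M0 hi0) = true := br1 hr4 hx349 hx450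
              have hx452 : c (pe σ M1 hi1) = false := bpp hp0 hx451
              have hx453 : c (pe σ M31 hi31) = true := br3 hr9 hx452 hx443
              have hx454 : c (pe σ M22 hi22) = false := bpq hp77 hx453
              have hx455 : c (pe σ M28 hi28) = true := br3 hr8 hx454 hx447
              have hx456 : c (pe σ M12 hi12) = false := bpq hp47 hx455
              have hx457 : c (pe σ M24 hi24) = false := bpq hp81 hx455
              have hx458 : c (pe σ M36 hi36) = true := br3 hr10 hx347 hx456
              have hx459 : c (pe σ M14 hi14) = true := br1 hr11 hx457 hx449
              have hx460 : c (pe σ M4 hi4) = false := bpq hp16 hx458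
              exact bc2 hp55 hx459 hx458
      · rcases Bool.eq_false_or_eq_true (c (pe σ M25 hi25)) with hd27 | hd27
        · have hx461 : c (pe σ M2 hi2) = false := bpq hp8 hd27
          have hx462 : c (pe σ M28 hi28) = false := bpp hp84 hd27
          have hx463 : c (pe σ M29 hi29) = false := bpp hp85 hd27
          rcases Bool.eq_false_or_eq_true (c (pe σ M6 hi6)) with hd28 | hd28
          · have hx464 : c (pe σ M11 hi11) = false := bpp hp20 hd28
            have hx465 : c (pe σ M13 hi13) = false := bpp hp21 hd28
            have hx466 : c (pe σ M23 hi23) = false := bpp hp22 hd28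
            have hx467 : c (pe σ M30 hi30) = false := bpp hp23 hd28
            have hx468 : c (pe σ M36 hi36) = false := bpp hp24 hd28
            have hx469 : c (pe σ M37 hi37) = false := bpp hp25 hd28
            have hx470 : c (pe σ M38 hi38) = false := bpp hp26 hd28
            have hx471 : c (pe σ M20 hi20) = true := br2 hr5 hx464 hx346
            have hx472 : c (pe σ M22 hi22) = true := br1 hr8 hx466 hx462
            have hx473 : c (pe σ M1 hi1) = false := bpq hp4 hx471
            have hx474 : c (pe σ M7 hi7) = false := bpq hp29 hx472
            have hx475 : c (pe σ M35 hi35) = false := bpp hp72 hx471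
            have hx476 : c (pe σ M31 hi31) = false := bpp hp77 hx472
            have hx477 : c (pe σ M9 hi9) = true := br2 hr3 hx474 hx470
            have hx478 : c (pe σ M26 hi26) = true := br2 hr9 hx473 hx476
            have hx479 : c (pe σ M19 hi19) = false := bpp hp36 hx477
            exact bc2 hp37 hx477 hx478
          · rcases Bool.eq_false_or_eq_true (c (pe σ M13 hi13)) with hd29 | hd29
            · have hx480 : c (pe σ M20 hi20) = false := bpp hp50 hd29
              have hx481 : c (pe σ M27 hi27) = false := bpp hp51 hd29
              have hx482 : c (pe σ M37 hi37) = false := bpp hp52 hd29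
              have hx483 : c (pe σ M11 hi11) = true := br1 hr5 hx480 hx346
              have hx484 : c (pe σ M38 hi38) = false := bpp hp46 hx483
              rcases Bool.eq_false_or_eq_true (c (pe σ M7 hi7)) with hd30 | hd30
              · have hx485 : c (pe σ M9 hi9) = false := bpp hp27 hd30
                have hx486 : c (pe σ M14 hi14) = false := bpp hp28 hd30
                have hx487 : c (pe σ M22 hi22) = false := bpp hp29 hd30
                have hx488 : c (pe σ M40 hi40) = false := bpp hp31 hd30
                have hx489 : c (pe σ M23 hi23) = true := br2 hr8 hx487 hx462
                have hx490 : c (pe σ M24 hi24) = true := br2 hr11 hx486 hx481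
                have hx491 : c (pe σ M0 hi0) = false := bpq hp1 hx489
                have hx492 : c (pe σ M3 hi3) = false := bpq hp12 hx489
                have hx493 : c (pe σ M16 hi16) = false := bpq hp59 hx489
                have hx494 : c (pe σ M30 hi30) = false := bpp hp79 hx489
                have hx495 : c (pe σ M39 hi39) = false := bpp hp83 hx490
                have hx496 : c (pe σ M32 hi32) = true := br3 hr4 hx491 hx463
                have hx497 : c (pe σ M5 hi5) = true := br2 hr6 hx492 hx488
                have hx498 : c (pe σ M17 hi17) = true := br2 hr12 hx493 hx346
                have hx499 : c (pe σ M19 hi19) = true := br2 hr13 hx461 hx495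
                exact bc2 hp17 hx497 hx496
              · have hx500 : c (pe σ M9 hi9) = true := br2 hr3 hd30 hx484
                have hx501 : c (pe σ M19 hi19) = false := bpp hp36 hx500
                have hx502 : c (pe σ M26 hi26) = false := bpp hp37 hx500
                have hx503 : c (pe σ M35 hi35) = false := bpp hp39 hx500
                have hx504 : c (pe σ M39 hi39) = true := br3 hr13 hx461 hx501
                have hx505 : c (pe σ M17 hi17) = false := bpq hp64 hx504
                have hx506 : c (pe σ M24 hi24) = false := bpq hp83 hx504
                have hx507 : c (pe σ M14 hi14) = true := br1 hr11 hx506 hx481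
                have hx508 : c (pe σ M16 hi16) = true := br1 hr12 hx505 hx346
                have hx509 : c (pe σ M36 hi36) = false := bpp hp55 hx507
                have hx510 : c (pe σ M23 hi23) = false := bpp hp59 hx508
                have hx511 : c (pe σ M22 hi22) = true := br1 hr8 hx510 hx462
                have hx512 : c (pe σ M30 hi30) = true := br3 hr15 hd28 hx510
                have hx513 : c (pe σ M31 hi31) = false := bpp hp77 hx511
                have hx514 : c (pe σ M32 hi32) = false := bpp hp91 hx512
                have hx515 : c (pe σ M0 hi0) = true := br1 hr4 hx463 hx514
                have hx516 : c (pe σ M1 hi1) = true := br1 hr9 hx502 hx513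
                exact bc2 hp0 hx515 hx516
            · have hx517 : c (pe σ M37 hi37) = true := br3 hr2 hd28 hd29
              have hx518 : c (pe σ M5 hi5) = false := bpq hp18 hx517
              have hx519 : c (pe σ M16 hi16) = false := bpq hp61 hx517
              have hx520 : c (pe σ M17 hi17) = true := br2 hr12 hx519 hx346
              have hx521 : c (pe σ M38 hi38) = false := bpp hp63 hx520
              have hx522 : c (pe σ M39 hi39) = false := bpp hp64 hx520
              have hx523 : c (pe σ M19 hi19) = true := br2 hr13 hx461 hx522
              have hx524 : c (pe σ M9 hi9) = false := bpq hp36 hx523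
              have hx525 : c (pe σ M31 hi31) = false := bpp hp67 hx523
              have hx526 : c (pe σ M35 hi35) = false := bpp hp69 hx523
              have hx527 : c (pe σ M7 hi7) = true := br1 hr3 hx524 hx521
              have hx528 : c (pe σ M14 hi14) = false := bpp hp28 hx527
              have hx529 : c (pe σ M22 hi22) = false := bpp hp29 hx527
              have hx530 : c (pe σ M40 hi40) = false := bpp hp31 hx527
              have hx531 : c (pe σ M3 hi3) = true := br1 hr6 hx518 hx530
              have hx532 : c (pe σ M23 hi23) = true := br2 hr8 hx529 hx462
              have hx533 : c (pe σ M0 hi0) = false := bpq hp1 hx532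
              exact bc2 hp12 hx531 hx532
        · have hx534 : c (pe σ M29 hi29) = true := br3 hr1 hd21 hd27
          have hx535 : c (pe σ M0 hi0) = false := bpq hp2 hx534
          have hx536 : c (pe σ M9 hi9) = false := bpq hp38 hx534
          have hx537 : c (pe σ M24 hi24) = false := bpq hp82 hx534
          have hx538 : c (pe σ M26 hi26) = false := bpq hp86 hx534
          have hx539 : c (pe σ M32 hi32) = false := bpp hp90 hx534
          rcases Bool.eq_false_or_eq_true (c (pe σ M6 hi6)) with hd31 | hd31
          · have hx540 : c (pe σ M11 hi11) = false := bpp hp20 hd31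
            have hx541 : c (pe σ M13 hi13) = false := bpp hp21 hd31
            have hx542 : c (pe σ M23 hi23) = false := bpp hp22 hd31
            have hx543 : c (pe σ M30 hi30) = false := bpp hp23 hd31
            have hx544 : c (pe σ M36 hi36) = false := bpp hp24 hd31
            have hx545 : c (pe σ M37 hi37) = false := bpp hp25 hd31
            have hx546 : c (pe σ M38 hi38) = false := bpp hp26 hd31
            have hx547 : c (pe σ M7 hi7) = true := br1 hr3 hx536 hx546
            have hx548 : c (pe σ M20 hi20) = true := br2 hr5 hx540 hx346
            have hx549 : c (pe σ M1 hi1) = false := bpq hp4 hx548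
            have hx550 : c (pe σ M14 hi14) = false := bpp hp28 hx547
            have hx551 : c (pe σ M22 hi22) = false := bpp hp29 hx547
            have hx552 : c (pe σ M40 hi40) = false := bpp hp31 hx547
            have hx553 : c (pe σ M35 hi35) = false := bpp hp72 hx548
            have hx554 : c (pe σ M19 hi19) = true := br2 hr7 hx536 hx553
            have hx555 : c (pe σ M28 hi28) = true := br3 hr8 hx551 hx542
            have hx556 : c (pe σ M31 hi31) = true := br3 hr9 hx549 hx538
            have hx557 : c (pe σ M27 hi27) = true := br3 hr11 hx550 hx537
            have hx558 : c (pe σ M2 hi2) = false := bpq hp7 hx554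
            have hx559 : c (pe σ M12 hi12) = false := bpq hp47 hx555
            exact bc2 hp67 hx554 hx556
          · rcases Bool.eq_false_or_eq_true (c (pe σ M13 hi13)) with hd32 | hd32
            · have hx560 : c (pe σ M20 hi20) = false := bpp hp50 hd32
              have hx561 : c (pe σ M27 hi27) = false := bpp hp51 hd32
              have hx562 : c (pe σ M37 hi37) = false := bpp hp52 hd32
              have hx563 : c (pe σ M11 hi11) = true := br1 hr5 hx560 hx346
              have hx564 : c (pe σ M14 hi14) = true := br1 hr11 hx537 hx561
              have hx565 : c (pe σ M7 hi7) = false := bpq hp28 hx564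
              have hx566 : c (pe σ M38 hi38) = false := bpp hp46 hx563
              have hx567 : c (pe σ M36 hi36) = false := bpp hp55 hx564
              exact bc3 hr3 hx565 hx536 hx566
            · have hx568 : c (pe σ M37 hi37) = true := br3 hr2 hd31 hd32
              have hx569 : c (pe σ M5 hi5) = false := bpq hp18 hx568
              have hx570 : c (pe σ M16 hi16) = false := bpq hp61 hx568
              have hx571 : c (pe σ M17 hi17) = true := br2 hr12 hx570 hx346
              have hx572 : c (pe σ M38 hi38) = false := bpp hp63 hx571
              have hx573 : c (pe σ M39 hi39) = false := bpp hp64 hx571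
              have hx574 : c (pe σ M7 hi7) = true := br1 hr3 hx536 hx572
              have hx575 : c (pe σ M14 hi14) = false := bpp hp28 hx574
              have hx576 : c (pe σ M22 hi22) = false := bpp hp29 hx574
              have hx577 : c (pe σ M40 hi40) = false := bpp hp31 hx574
              have hx578 : c (pe σ M3 hi3) = true := br1 hr6 hx569 hx577
              have hx579 : c (pe σ M27 hi27) = true := br3 hr11 hx575 hx537
              have hx580 : c (pe σ M23 hi23) = false := bpp hp12 hx578
              have hx581 : c (pe σ M30 hi30) = false := bpp hp88 hx579
              have hx582 : c (pe σ M28 hi28) = true := br3 hr8 hx576 hx580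
              exact bc3 hr15 hd31 hx580 hx581
    · have hx583 : c (pe σ M33 hi33) = true := br3 hr0 hd0 hd20
      have hx584 : c (pe σ M4 hi4) = false := bpq hp15 hx583
      rcases Bool.eq_false_or_eq_true (c (pe σ M10 hi10)) with hd33 | hd33
      · have hx585 : c (pe σ M8 hi8) = false := bpq hp32 hd33
        have hx586 : c (pe σ M25 hi25) = false := bpp hp41 hd33
        have hx587 : c (pe σ M29 hi29) = false := bpp hp42 hd33
        have hx588 : c (pe σ M35 hi35) = false := bpp hp43 hd33
        rcases Bool.eq_false_or_eq_true (c (pe σ M6 hi6)) with hd34 | hd34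
        · have hx589 : c (pe σ M11 hi11) = false := bpp hp20 hd34
          have hx590 : c (pe σ M13 hi13) = false := bpp hp21 hd34
          have hx591 : c (pe σ M23 hi23) = false := bpp hp22 hd34
          have hx592 : c (pe σ M30 hi30) = false := bpp hp23 hd34
          have hx593 : c (pe σ M36 hi36) = false := bpp hp24 hd34
          have hx594 : c (pe σ M37 hi37) = false := bpp hp25 hd34
          have hx595 : c (pe σ M38 hi38) = false := bpp hp26 hd34
          have hx596 : c (pe σ M12 hi12) = true := br2 hr10 hx585 hx593
          have hx597 : c (pe σ M21 hi21) = true := br2 hr14 hx584 hx593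
          have hx598 : c (pe σ M28 hi28) = false := bpp hp47 hx596
          have hx599 : c (pe σ M34 hi34) = false := bpp hp48 hx596
          have hx600 : c (pe σ M20 hi20) = true := br2 hr5 hx589 hx599
          have hx601 : c (pe σ M22 hi22) = true := br1 hr8 hx591 hx598
          have hx602 : c (pe σ M1 hi1) = false := bpq hp4 hx600
          have hx603 : c (pe σ M7 hi7) = false := bpq hp29 hx601
          have hx604 : c (pe σ M31 hi31) = false := bpp hp77 hx601
          have hx605 : c (pe σ M9 hi9) = true := br2 hr3 hx603 hx595
          have hx606 : c (pe σ M26 hi26) = true := br2 hr9 hx602 hx604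
          have hx607 : c (pe σ M19 hi19) = false := bpp hp36 hx605
          exact bc2 hp37 hx605 hx606
        · rcases Bool.eq_false_or_eq_true (c (pe σ M13 hi13)) with hd35 | hd35
          · have hx608 : c (pe σ M20 hi20) = false := bpp hp50 hd35
            have hx609 : c (pe σ M27 hi27) = false := bpp hp51 hd35
            have hx610 : c (pe σ M37 hi37) = false := bpp hp52 hd35
            rcases Bool.eq_false_or_eq_true (c (pe σ M7 hi7)) with hd36 | hd36
            · have hx611 : c (pe σ M9 hi9) = false := bpp hp27 hd36
              have hx612 : c (pe σ M14 hi14) = false := bpp hp28 hd36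
              have hx613 : c (pe σ M22 hi22) = false := bpp hp29 hd36
              have hx614 : c (pe σ M38 hi38) = false := bpp hp30 hd36
              have hx615 : c (pe σ M40 hi40) = false := bpp hp31 hd36
              have hx616 : c (pe σ M19 hi19) = true := br2 hr7 hx611 hx588
              have hx617 : c (pe σ M24 hi24) = true := br2 hr11 hx612 hx609
              have hx618 : c (pe σ M2 hi2) = false := bpq hp7 hx616
              have hx619 : c (pe σ M31 hi31) = false := bpp hp67 hx616
              have hx620 : c (pe σ M34 hi34) = false := bpp hp68 hx616
              have hx621 : c (pe σ M39 hi39) = false := bpp hp70 hx616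
              have hx622 : c (pe σ M28 hi28) = false := bpp hp81 hx617
              have hx623 : c (pe σ M11 hi11) = true := br1 hr5 hx608 hx620
              have hx624 : c (pe σ M23 hi23) = true := br2 hr8 hx613 hx622
              have hx625 : c (pe σ M0 hi0) = false := bpq hp1 hx624
              have hx626 : c (pe σ M3 hi3) = false := bpq hp12 hx624
              have hx627 : c (pe σ M16 hi16) = false := bpq hp59 hx624
              have hx628 : c (pe σ M30 hi30) = false := bpp hp79 hx624
              have hx629 : c (pe σ M32 hi32) = true := br3 hr4 hx625 hx587
              have hx630 : c (pe σ M5 hi5) = true := br2 hr6 hx626 hx615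
              have hx631 : c (pe σ M17 hi17) = true := br2 hr12 hx627 hx620
              exact bc2 hp17 hx630 hx629
            · rcases Bool.eq_false_or_eq_true (c (pe σ M9 hi9)) with hd37 | hd37
              · have hx632 : c (pe σ M19 hi19) = false := bpp hp36 hd37
                have hx633 : c (pe σ M26 hi26) = false := bpp hp37 hd37
                have hx634 : c (pe σ M38 hi38) = false := bpp hp40 hd37
                rcases Bool.eq_false_or_eq_true (c (pe σ M0 hi0)) with hd38 | hd38
                · have hx635 : c (pe σ M1 hi1) = false := bpp hp0 hd38
                  have hx636 : c (pe σ M23 hi23) = false := bpp hp1 hd38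
                  have hx637 : c (pe σ M32 hi32) = false := bpp hp3 hd38
                  have hx638 : c (pe σ M31 hi31) = true := br3 hr9 hx635 hx633
                  have hx639 : c (pe σ M30 hi30) = true := br3 hr15 hd34 hx636
                  have hx640 : c (pe σ M22 hi22) = false := bpq hp77 hx638
                  have hx641 : c (pe σ M28 hi28) = true := br3 hr8 hx640 hx636
                  have hx642 : c (pe σ M12 hi12) = false := bpq hp47 hx641
                  have hx643 : c (pe σ M24 hi24) = false := bpq hp81 hx641
                  have hx644 : c (pe σ M36 hi36) = true := br3 hr10 hx585 hx642
                  have hx645 : c (pe σ M14 hi14) = true := br1 hr11 hx643 hx609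
                  exact bc2 hp55 hx645 hx644
                · have hx646 : c (pe σ M32 hi32) = true := br3 hr4 hd38 hx587
                  have hx647 : c (pe σ M5 hi5) = false := bpq hp17 hx646
                  have hx648 : c (pe σ M30 hi30) = false := bpq hp91 hx646
                  have hx649 : c (pe σ M23 hi23) = true := br2 hr15 hd34 hx648
                  have hx650 : c (pe σ M3 hi3) = false := bpq hp12 hx649
                  have hx651 : c (pe σ M16 hi16) = false := bpq hp59 hx649
                  have hx652 : c (pe σ M22 hi22) = false := bpq hp75 hx649
                  have hx653 : c (pe σ M28 hi28) = false := bpp hp78 hx649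
                  have hx654 : c (pe σ M40 hi40) = true := br3 hr6 hx650 hx647
                  have hx655 : c (pe σ M2 hi2) = false := bpq hp10 hx654
                  have hx656 : c (pe σ M39 hi39) = true := br3 hr13 hx655 hx632
                  have hx657 : c (pe σ M17 hi17) = false := bpq hp64 hx656
                  have hx658 : c (pe σ M24 hi24) = false := bpq hp83 hx656
                  have hx659 : c (pe σ M14 hi14) = true := br1 hr11 hx658 hx609
                  have hx660 : c (pe σ M34 hi34) = true := br3 hr12 hx651 hx657
                  have hx661 : c (pe σ M11 hi11) = false := bpq hp45 hx660
                  have hx662 : c (pe σ M12 hi12) = false := bpq hp48 hx660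
                  have hx663 : c (pe σ M36 hi36) = false := bpp hp55 hx659
                  have hx664 : c (pe σ M21 hi21) = false := bpq hp73 hx660
                  exact bc3 hr10 hx585 hx662 hx663
              · have hx665 : c (pe σ M38 hi38) = true := br3 hr3 hd36 hd37
                have hx666 : c (pe σ M19 hi19) = true := br2 hr7 hd37 hx588
                have hx667 : c (pe σ M2 hi2) = false := bpq hp7 hx666
                have hx668 : c (pe σ M11 hi11) = false := bpq hp46 hx665
                have hx669 : c (pe σ M17 hi17) = false := bpq hp63 hx665
                have hx670 : c (pe σ M31 hi31) = false := bpp hp67 hx666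
                have hx671 : c (pe σ M34 hi34) = false := bpp hp68 hx666
                have hx672 : c (pe σ M39 hi39) = false := bpp hp70 hx666
                exact bc3 hr5 hx668 hx608 hx671
          · have hx673 : c (pe σ M37 hi37) = true := br3 hr2 hd34 hd35
            have hx674 : c (pe σ M5 hi5) = false := bpq hp18 hx673
            have hx675 : c (pe σ M16 hi16) = false := bpq hp61 hx673
            rcases Bool.eq_false_or_eq_true (c (pe σ M7 hi7)) with hd39 | hd39
            · have hx676 : c (pe σ M9 hi9) = false := bpp hp27 hd39
              have hx677 : c (pe σ M14 hi14) = false := bpp hp28 hd39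
              have hx678 : c (pe σ M22 hi22) = false := bpp hp29 hd39
              have hx679 : c (pe σ M38 hi38) = false := bpp hp30 hd39
              have hx680 : c (pe σ M40 hi40) = false := bpp hp31 hd39
              have hx681 : c (pe σ M3 hi3) = true := br1 hr6 hx674 hx680
              have hx682 : c (pe σ M19 hi19) = true := br2 hr7 hx676 hx588
              have hx683 : c (pe σ M2 hi2) = false := bpq hp7 hx682
              have hx684 : c (pe σ M23 hi23) = false := bpp hp12 hx681
              have hx685 : c (pe σ M31 hi31) = false := bpp hp67 hx682
              have hx686 : c (pe σ M34 hi34) = false := bpp hp68 hx682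
              have hx687 : c (pe σ M39 hi39) = false := bpp hp70 hx682
              have hx688 : c (pe σ M28 hi28) = true := br3 hr8 hx678 hx684
              have hx689 : c (pe σ M17 hi17) = true := br2 hr12 hx675 hx686
              have hx690 : c (pe σ M30 hi30) = true := br3 hr15 hd34 hx684
              have hx691 : c (pe σ M12 hi12) = false := bpq hp47 hx688
              have hx692 : c (pe σ M24 hi24) = false := bpq hp81 hx688
              have hx693 : c (pe σ M27 hi27) = false := bpq hp88 hx690
              have hx694 : c (pe σ M32 hi32) = false := bpp hp91 hx690
              have hx695 : c (pe σ M0 hi0) = true := br1 hr4 hx587 hx694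
              have hx696 : c (pe σ M36 hi36) = true := br3 hr10 hx585 hx691
              exact bc3 hr11 hx677 hx692 hx693
            · rcases Bool.eq_false_or_eq_true (c (pe σ M9 hi9)) with hd40 | hd40
              · have hx697 : c (pe σ M19 hi19) = false := bpp hp36 hd40
                have hx698 : c (pe σ M26 hi26) = false := bpp hp37 hd40
                have hx699 : c (pe σ M38 hi38) = false := bpp hp40 hd40
                rcases Bool.eq_false_or_eq_true (c (pe σ M0 hi0)) with hd41 | hd41
                · have hx700 : c (pe σ M1 hi1) = false := bpp hp0 hd41
                  have hx701 : c (pe σ M23 hi23) = false := bpp hp1 hd41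
                  have hx702 : c (pe σ M32 hi32) = false := bpp hp3 hd41
                  have hx703 : c (pe σ M31 hi31) = true := br3 hr9 hx700 hx698
                  have hx704 : c (pe σ M30 hi30) = true := br3 hr15 hd34 hx701
                  have hx705 : c (pe σ M22 hi22) = false := bpq hp77 hx703
                  have hx706 : c (pe σ M27 hi27) = false := bpq hp88 hx704
                  have hx707 : c (pe σ M28 hi28) = true := br3 hr8 hx705 hx701
                  have hx708 : c (pe σ M12 hi12) = false := bpq hp47 hx707
                  have hx709 : c (pe σ M24 hi24) = false := bpq hp81 hx707
                  have hx710 : c (pe σ M36 hi36) = true := br3 hr10 hx585 hx708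
                  have hx711 : c (pe σ M14 hi14) = true := br1 hr11 hx709 hx706
                  exact bc2 hp55 hx711 hx710
                · have hx712 : c (pe σ M32 hi32) = true := br3 hr4 hd41 hx587
                  have hx713 : c (pe σ M30 hi30) = false := bpq hp91 hx712
                  have hx714 : c (pe σ M23 hi23) = true := br2 hr15 hd34 hx713
                  have hx715 : c (pe σ M3 hi3) = false := bpq hp12 hx714
                  have hx716 : c (pe σ M22 hi22) = false := bpq hp75 hx714
                  have hx717 : c (pe σ M28 hi28) = false := bpp hp78 hx714
                  have hx718 : c (pe σ M40 hi40) = true := br3 hr6 hx715 hx674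
                  have hx719 : c (pe σ M2 hi2) = false := bpq hp10 hx718
                  have hx720 : c (pe σ M27 hi27) = false := bpq hp89 hx718
                  have hx721 : c (pe σ M39 hi39) = true := br3 hr13 hx719 hx697
                  have hx722 : c (pe σ M17 hi17) = false := bpq hp64 hx721
                  have hx723 : c (pe σ M24 hi24) = false := bpq hp83 hx721
                  have hx724 : c (pe σ M14 hi14) = true := br1 hr11 hx723 hx720
                  have hx725 : c (pe σ M34 hi34) = true := br3 hr12 hx675 hx722
                  have hx726 : c (pe σ M11 hi11) = false := bpq hp45 hx725
                  have hx727 : c (pe σ M12 hi12) = false := bpq hp48 hx725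
                  have hx728 : c (pe σ M36 hi36) = false := bpp hp55 hx724
                  have hx729 : c (pe σ M20 hi20) = false := bpq hp71 hx725
                  have hx730 : c (pe σ M21 hi21) = false := bpq hp73 hx725
                  exact bc3 hr10 hx585 hx727 hx728
              · have hx731 : c (pe σ M38 hi38) = true := br3 hr3 hd39 hd40
                have hx732 : c (pe σ M19 hi19) = true := br2 hr7 hd40 hx588
                have hx733 : c (pe σ M2 hi2) = false := bpq hp7 hx732
                have hx734 : c (pe σ M11 hi11) = false := bpq hp46 hx731
                have hx735 : c (pe σ M17 hi17) = false := bpq hp63 hx731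
                have hx736 : c (pe σ M31 hi31) = false := bpp hp67 hx732
                have hx737 : c (pe σ M34 hi34) = false := bpp hp68 hx732
                have hx738 : c (pe σ M39 hi39) = false := bpp hp70 hx732
                have hx739 : c (pe σ M20 hi20) = true := br2 hr5 hx734 hx737
                exact bc3 hr12 hx675 hx735 hx737
      · rcases Bool.eq_false_or_eq_true (c (pe σ M25 hi25)) with hd42 | hd42
        · have hx740 : c (pe σ M2 hi2) = false := bpq hp8 hd42
          have hx741 : c (pe σ M28 hi28) = false := bpp hp84 hd42
          have hx742 : c (pe σ M29 hi29) = false := bpp hp85 hd42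
          rcases Bool.eq_false_or_eq_true (c (pe σ M6 hi6)) with hd43 | hd43
          · have hx743 : c (pe σ M11 hi11) = false := bpp hp20 hd43
            have hx744 : c (pe σ M13 hi13) = false := bpp hp21 hd43
            have hx745 : c (pe σ M23 hi23) = false := bpp hp22 hd43
            have hx746 : c (pe σ M30 hi30) = false := bpp hp23 hd43
            have hx747 : c (pe σ M36 hi36) = false := bpp hp24 hd43
            have hx748 : c (pe σ M37 hi37) = false := bpp hp25 hd43
            have hx749 : c (pe σ M38 hi38) = false := bpp hp26 hd43
            have hx750 : c (pe σ M22 hi22) = true := br1 hr8 hx745 hx741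
            have hx751 : c (pe σ M21 hi21) = true := br2 hr14 hx584 hx747
            have hx752 : c (pe σ M7 hi7) = false := bpq hp29 hx750
            have hx753 : c (pe σ M34 hi34) = false := bpp hp73 hx751
            have hx754 : c (pe σ M31 hi31) = false := bpp hp77 hx750
            have hx755 : c (pe σ M9 hi9) = true := br2 hr3 hx752 hx749
            have hx756 : c (pe σ M20 hi20) = true := br2 hr5 hx743 hx753
            have hx757 : c (pe σ M1 hi1) = false := bpq hp4 hx756
            have hx758 : c (pe σ M19 hi19) = false := bpp hp36 hx755
            have hx759 : c (pe σ M26 hi26) = false := bpp hp37 hx755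
            have hx760 : c (pe σ M35 hi35) = false := bpp hp39 hx755
            exact bc3 hr9 hx757 hx759 hx754
          · rcases Bool.eq_false_or_eq_true (c (pe σ M13 hi13)) with hd44 | hd44
            · have hx761 : c (pe σ M20 hi20) = false := bpp hp50 hd44
              have hx762 : c (pe σ M27 hi27) = false := bpp hp51 hd44
              have hx763 : c (pe σ M37 hi37) = false := bpp hp52 hd44
              rcases Bool.eq_false_or_eq_true (c (pe σ M7 hi7)) with hd45 | hd45
              · have hx764 : c (pe σ M9 hi9) = false := bpp hp27 hd45
                have hx765 : c (pe σ M14 hi14) = false := bpp hp28 hd45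
                have hx766 : c (pe σ M22 hi22) = false := bpp hp29 hd45
                have hx767 : c (pe σ M38 hi38) = false := bpp hp30 hd45
                have hx768 : c (pe σ M40 hi40) = false := bpp hp31 hd45
                have hx769 : c (pe σ M23 hi23) = true := br2 hr8 hx766 hx741
                have hx770 : c (pe σ M24 hi24) = true := br2 hr11 hx765 hx762
                have hx771 : c (pe σ M0 hi0) = false := bpq hp1 hx769
                have hx772 : c (pe σ M3 hi3) = false := bpq hp12 hx769
                have hx773 : c (pe σ M16 hi16) = false := bpq hp59 hx769
                have hx774 : c (pe σ M30 hi30) = false := bpp hp79 hx769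
                have hx775 : c (pe σ M39 hi39) = false := bpp hp83 hx770
                have hx776 : c (pe σ M32 hi32) = true := br3 hr4 hx771 hx742
                have hx777 : c (pe σ M5 hi5) = true := br2 hr6 hx772 hx768
                have hx778 : c (pe σ M19 hi19) = true := br2 hr13 hx740 hx775
                exact bc2 hp17 hx777 hx776
              · rcases Bool.eq_false_or_eq_true (c (pe σ M9 hi9)) with hd46 | hd46
                · have hx779 : c (pe σ M19 hi19) = false := bpp hp36 hd46
                  have hx780 : c (pe σ M26 hi26) = false := bpp hp37 hd46
                  have hx781 : c (pe σ M35 hi35) = false := bpp hp39 hd46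
                  have hx782 : c (pe σ M38 hi38) = false := bpp hp40 hd46
                  have hx783 : c (pe σ M39 hi39) = true := br3 hr13 hx740 hx779
                  have hx784 : c (pe σ M17 hi17) = false := bpq hp64 hx783
                  have hx785 : c (pe σ M24 hi24) = false := bpq hp83 hx783
                  have hx786 : c (pe σ M14 hi14) = true := br1 hr11 hx785 hx762
                  have hx787 : c (pe σ M36 hi36) = false := bpp hp55 hx786
                  have hx788 : c (pe σ M21 hi21) = true := br2 hr14 hx584 hx787
                  have hx789 : c (pe σ M34 hi34) = false := bpp hp73 hx788
                  have hx790 : c (pe σ M11 hi11) = true := br1 hr5 hx761 hx789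
                  have hx791 : c (pe σ M16 hi16) = true := br1 hr12 hx784 hx789
                  have hx792 : c (pe σ M23 hi23) = false := bpp hp59 hx791
                  have hx793 : c (pe σ M22 hi22) = true := br1 hr8 hx792 hx741
                  have hx794 : c (pe σ M30 hi30) = true := br3 hr15 hd43 hx792
                  have hx795 : c (pe σ M31 hi31) = false := bpp hp77 hx793
                  have hx796 : c (pe σ M32 hi32) = false := bpp hp91 hx794
                  have hx797 : c (pe σ M0 hi0) = true := br1 hr4 hx742 hx796
                  have hx798 : c (pe σ M1 hi1) = true := br1 hr9 hx780 hx795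
                  exact bc2 hp0 hx797 hx798
                · have hx799 : c (pe σ M38 hi38) = true := br3 hr3 hd45 hd46
                  have hx800 : c (pe σ M11 hi11) = false := bpq hp46 hx799
                  have hx801 : c (pe σ M17 hi17) = false := bpq hp63 hx799
                  have hx802 : c (pe σ M34 hi34) = true := br3 hr5 hx800 hx761
                  have hx803 : c (pe σ M12 hi12) = false := bpq hp48 hx802
                  have hx804 : c (pe σ M16 hi16) = false := bpq hp60 hx802
                  have hx805 : c (pe σ M19 hi19) = false := bpq hp68 hx802
                  have hx806 : c (pe σ M21 hi21) = false := bpq hp73 hx802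
                  have hx807 : c (pe σ M35 hi35) = true := br3 hr7 hd46 hx805
                  have hx808 : c (pe σ M39 hi39) = true := br3 hr13 hx740 hx805
                  have hx809 : c (pe σ M36 hi36) = true := br3 hr14 hx584 hx806
                  have hx810 : c (pe σ M8 hi8) = false := bpq hp35 hx809
                  have hx811 : c (pe σ M14 hi14) = false := bpq hp55 hx809
                  have hx812 : c (pe σ M24 hi24) = false := bpq hp83 hx808
                  exact bc3 hr11 hx811 hx812 hx762
            · have hx813 : c (pe σ M37 hi37) = true := br3 hr2 hd43 hd44
              have hx814 : c (pe σ M5 hi5) = false := bpq hp18 hx813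
              have hx815 : c (pe σ M16 hi16) = false := bpq hp61 hx813
              rcases Bool.eq_false_or_eq_true (c (pe σ M7 hi7)) with hd47 | hd47
              · have hx816 : c (pe σ M9 hi9) = false := bpp hp27 hd47
                have hx817 : c (pe σ M14 hi14) = false := bpp hp28 hd47
                have hx818 : c (pe σ M22 hi22) = false := bpp hp29 hd47
                have hx819 : c (pe σ M38 hi38) = false := bpp hp30 hd47
                have hx820 : c (pe σ M40 hi40) = false := bpp hp31 hd47
                have hx821 : c (pe σ M3 hi3) = true := br1 hr6 hx814 hx820
                have hx822 : c (pe σ M23 hi23) = true := br2 hr8 hx818 hx741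
                have hx823 : c (pe σ M0 hi0) = false := bpq hp1 hx822
                exact bc2 hp12 hx821 hx822
              · rcases Bool.eq_false_or_eq_true (c (pe σ M9 hi9)) with hd48 | hd48
                · have hx824 : c (pe σ M19 hi19) = false := bpp hp36 hd48
                  have hx825 : c (pe σ M26 hi26) = false := bpp hp37 hd48
                  have hx826 : c (pe σ M35 hi35) = false := bpp hp39 hd48
                  have hx827 : c (pe σ M38 hi38) = false := bpp hp40 hd48
                  have hx828 : c (pe σ M39 hi39) = true := br3 hr13 hx740 hx824
                  have hx829 : c (pe σ M17 hi17) = false := bpq hp64 hx828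
                  have hx830 : c (pe σ M24 hi24) = false := bpq hp83 hx828
                  have hx831 : c (pe σ M34 hi34) = true := br3 hr12 hx815 hx829
                  have hx832 : c (pe σ M11 hi11) = false := bpq hp45 hx831
                  have hx833 : c (pe σ M12 hi12) = false := bpq hp48 hx831
                  have hx834 : c (pe σ M20 hi20) = false := bpq hp71 hx831
                  have hx835 : c (pe σ M21 hi21) = false := bpq hp73 hx831
                  have hx836 : c (pe σ M36 hi36) = true := br3 hr14 hx584 hx835
                  have hx837 : c (pe σ M8 hi8) = false := bpq hp35 hx836
                  have hx838 : c (pe σ M14 hi14) = false := bpq hp55 hx836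
                  have hx839 : c (pe σ M27 hi27) = true := br3 hr11 hx838 hx830
                  have hx840 : c (pe σ M30 hi30) = false := bpp hp88 hx839
                  have hx841 : c (pe σ M40 hi40) = false := bpp hp89 hx839
                  have hx842 : c (pe σ M3 hi3) = true := br1 hr6 hx814 hx841
                  have hx843 : c (pe σ M23 hi23) = true := br2 hr15 hd43 hx840
                  have hx844 : c (pe σ M0 hi0) = false := bpq hp1 hx843
                  exact bc2 hp12 hx842 hx843
                · have hx845 : c (pe σ M38 hi38) = true := br3 hr3 hd47 hd48
                  have hx846 : c (pe σ M11 hi11) = false := bpq hp46 hx845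
                  have hx847 : c (pe σ M17 hi17) = false := bpq hp63 hx845
                  have hx848 : c (pe σ M34 hi34) = true := br3 hr12 hx815 hx847
                  have hx849 : c (pe σ M12 hi12) = false := bpq hp48 hx848
                  have hx850 : c (pe σ M19 hi19) = false := bpq hp68 hx848
                  have hx851 : c (pe σ M20 hi20) = false := bpq hp71 hx848
                  have hx852 : c (pe σ M21 hi21) = false := bpq hp73 hx848
                  have hx853 : c (pe σ M35 hi35) = true := br3 hr7 hd48 hx850
                  have hx854 : c (pe σ M39 hi39) = true := br3 hr13 hx740 hx850
                  have hx855 : c (pe σ M36 hi36) = true := br3 hr14 hx584 hx852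
                  have hx856 : c (pe σ M8 hi8) = false := bpq hp35 hx855
                  have hx857 : c (pe σ M14 hi14) = false := bpq hp55 hx855
                  have hx858 : c (pe σ M24 hi24) = false := bpq hp83 hx854
                  have hx859 : c (pe σ M27 hi27) = true := br3 hr11 hx857 hx858
                  have hx860 : c (pe σ M30 hi30) = false := bpp hp88 hx859
                  have hx861 : c (pe σ M40 hi40) = false := bpp hp89 hx859
                  have hx862 : c (pe σ M3 hi3) = true := br1 hr6 hx814 hx861
                  have hx863 : c (pe σ M23 hi23) = true := br2 hr15 hd43 hx860
                  have hx864 : c (pe σ M0 hi0) = false := bpq hp1 hx863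
                  exact bc2 hp12 hx862 hx863
        · have hx865 : c (pe σ M29 hi29) = true := br3 hr1 hd33 hd42
          have hx866 : c (pe σ M0 hi0) = false := bpq hp2 hx865
          have hx867 : c (pe σ M9 hi9) = false := bpq hp38 hx865
          have hx868 : c (pe σ M24 hi24) = false := bpq hp82 hx865
          have hx869 : c (pe σ M26 hi26) = false := bpq hp86 hx865
          have hx870 : c (pe σ M32 hi32) = false := bpp hp90 hx865
          rcases Bool.eq_false_or_eq_true (c (pe σ M6 hi6)) with hd49 | hd49
          · have hx871 : c (pe σ M11 hi11) = false := bpp hp20 hd49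
            have hx872 : c (pe σ M13 hi13) = false := bpp hp21 hd49
            have hx873 : c (pe σ M23 hi23) = false := bpp hp22 hd49
            have hx874 : c (pe σ M30 hi30) = false := bpp hp23 hd49
            have hx875 : c (pe σ M36 hi36) = false := bpp hp24 hd49
            have hx876 : c (pe σ M37 hi37) = false := bpp hp25 hd49
            have hx877 : c (pe σ M38 hi38) = false := bpp hp26 hd49
            have hx878 : c (pe σ M7 hi7) = true := br1 hr3 hx867 hx877
            have hx879 : c (pe σ M21 hi21) = true := br2 hr14 hx584 hx875
            have hx880 : c (pe σ M14 hi14) = false := bpp hp28 hx878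
            have hx881 : c (pe σ M22 hi22) = false := bpp hp29 hx878
            have hx882 : c (pe σ M40 hi40) = false := bpp hp31 hx878
            have hx883 : c (pe σ M34 hi34) = false := bpp hp73 hx879
            have hx884 : c (pe σ M20 hi20) = true := br2 hr5 hx871 hx883
            have hx885 : c (pe σ M28 hi28) = true := br3 hr8 hx881 hx873
            have hx886 : c (pe σ M27 hi27) = true := br3 hr11 hx880 hx868
            have hx887 : c (pe σ M1 hi1) = false := bpq hp4 hx884
            have hx888 : c (pe σ M12 hi12) = false := bpq hp47 hx885
            have hx889 : c (pe σ M35 hi35) = false := bpp hp72 hx884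
            have hx890 : c (pe σ M19 hi19) = true := br2 hr7 hx867 hx889
            have hx891 : c (pe σ M31 hi31) = true := br3 hr9 hx887 hx869
            have hx892 : c (pe σ M8 hi8) = true := br1 hr10 hx888 hx875
            have hx893 : c (pe σ M2 hi2) = false := bpq hp7 hx890
            exact bc2 hp67 hx890 hx891
          · rcases Bool.eq_false_or_eq_true (c (pe σ M13 hi13)) with hd50 | hd50
            · have hx894 : c (pe σ M20 hi20) = false := bpp hp50 hd50
              have hx895 : c (pe σ M27 hi27) = false := bpp hp51 hd50
              have hx896 : c (pe σ M37 hi37) = false := bpp hp52 hd50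
              have hx897 : c (pe σ M14 hi14) = true := br1 hr11 hx868 hx895
              have hx898 : c (pe σ M7 hi7) = false := bpq hp28 hx897
              have hx899 : c (pe σ M36 hi36) = false := bpp hp55 hx897
              have hx900 : c (pe σ M38 hi38) = true := br3 hr3 hx898 hx867
              have hx901 : c (pe σ M21 hi21) = true := br2 hr14 hx584 hx899
              have hx902 : c (pe σ M11 hi11) = false := bpq hp46 hx900
              have hx903 : c (pe σ M17 hi17) = false := bpq hp63 hx900
              have hx904 : c (pe σ M34 hi34) = false := bpp hp73 hx901
              exact bc3 hr5 hx902 hx894 hx904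
            · have hx905 : c (pe σ M37 hi37) = true := br3 hr2 hd49 hd50
              have hx906 : c (pe σ M5 hi5) = false := bpq hp18 hx905
              have hx907 : c (pe σ M16 hi16) = false := bpq hp61 hx905
              rcases Bool.eq_false_or_eq_true (c (pe σ M7 hi7)) with hd51 | hd51
              · have hx908 : c (pe σ M14 hi14) = false := bpp hp28 hd51
                have hx909 : c (pe σ M22 hi22) = false := bpp hp29 hd51
                have hx910 : c (pe σ M38 hi38) = false := bpp hp30 hd51
                have hx911 : c (pe σ M40 hi40) = false := bpp hp31 hd51
                have hx912 : c (pe σ M3 hi3) = true := br1 hr6 hx906 hx911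
                have hx913 : c (pe σ M27 hi27) = true := br3 hr11 hx908 hx868
                have hx914 : c (pe σ M23 hi23) = false := bpp hp12 hx912
                have hx915 : c (pe σ M30 hi30) = false := bpp hp88 hx913
                have hx916 : c (pe σ M28 hi28) = true := br3 hr8 hx909 hx914
                exact bc3 hr15 hd49 hx914 hx915
              · have hx917 : c (pe σ M38 hi38) = true := br3 hr3 hd51 hx867
                have hx918 : c (pe σ M11 hi11) = false := bpq hp46 hx917
                have hx919 : c (pe σ M17 hi17) = false := bpq hp63 hx917
                have hx920 : c (pe σ M34 hi34) = true := br3 hr12 hx907 hx919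
                have hx921 : c (pe σ M12 hi12) = false := bpq hp48 hx920
                have hx922 : c (pe σ M19 hi19) = false := bpq hp68 hx920
                have hx923 : c (pe σ M20 hi20) = false := bpq hp71 hx920
                have hx924 : c (pe σ M21 hi21) = false := bpq hp73 hx920
                have hx925 : c (pe σ M35 hi35) = true := br3 hr7 hx867 hx922
                have hx926 : c (pe σ M36 hi36) = true := br3 hr14 hx584 hx924
                have hx927 : c (pe σ M8 hi8) = false := bpq hp35 hx926
                have hx928 : c (pe σ M14 hi14) = false := bpq hp55 hx926
                have hx929 : c (pe σ M27 hi27) = true := br3 hr11 hx928 hx868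
                have hx930 : c (pe σ M30 hi30) = false := bpp hp88 hx929
                have hx931 : c (pe σ M40 hi40) = false := bpp hp89 hx929
                have hx932 : c (pe σ M3 hi3) = true := br1 hr6 hx906 hx931
                have hx933 : c (pe σ M23 hi23) = true := br2 hr15 hd49 hx930
                exact bc2 hp12 hx932 hx933

end Main

end NoKS

/-- For every ring `R` and every `n ≥ 3`, there is no Kochen–Specker coloring of the
idempotents of `Mₙ(R)`. -/
theorem no_KS_coloring_matrix_ring (R : Type*) [Ring R] (n : ℕ) (hn : 3 ≤ n) :
    ¬ ∃ c : {e : Matrix (Fin n) (Fin n) R // e * e = e} → Bool, IsKSColoring c := by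
  rintro ⟨c, hc⟩
  obtain ⟨m, rfl⟩ : ∃ m, n = 3 + m := ⟨n - 3, by omega⟩
  set σ0 : Fin 3 ⊕ Fin m ≃ Fin (3 + m) := finSumFinEquiv with hσ0
  obtain ⟨hat, -⟩ := hc (3 + m) (fun x => NoKS.ue x)
    (fun x y hxy => NoKS.du_mul_ne R hxy)
  by_cases hex : ∃ j : Fin m, c (NoKS.ue (σ0 (Sum.inr j))) = true
  · obtain ⟨j₀, hj₀⟩ := hex
    refine NoKS.core ((Equiv.swap (Sum.inl (0 : Fin 3)) (Sum.inr j₀)).trans σ0) c hc ?_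
    intro j
    rcases eq_or_ne j j₀ with rfl | hj
    · have hswap : (Equiv.swap (Sum.inl (0 : Fin 3)) (Sum.inr j)) (Sum.inr j) = Sum.inl 0 :=
        Equiv.swap_apply_right _ _
      rw [Equiv.trans_apply, hswap]
      cases hb : c (NoKS.ue (σ0 (Sum.inl 0))) with
      | false => rfl
      | true =>
          have := hat _ _ hb hj₀
          exact absurd (σ0.injective this) (by simp)
    · have hswap : (Equiv.swap (Sum.inl (0 : Fin 3)) (Sum.inr j₀)) (Sum.inr j) = Sum.inr j :=
        Equiv.swap_apply_of_ne_of_ne (by simp) (by simpa using hj)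
      rw [Equiv.trans_apply, hswap]
      cases hb : c (NoKS.ue (σ0 (Sum.inr j))) with
      | false => rfl
      | true =>
          have := hat _ _ hb hj₀
          have := σ0.injective this
          simp only [Sum.inr.injEq] at this
          exact absurd this hj
  · push_neg at hex
    refine NoKS.core σ0 c hc fun j => ?_
    cases hb : c (NoKS.ue (σ0 (Sum.inr j))) with
    | false => rfl
    | true => exact absurd hb (hex j)
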